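/- arXiv:2304.01787 — 8 statements merged into one kernel-verified Lean document; each statement's English description precedes it below -/
import Mathlib

section
/- Let G be a finite abelian group and 1 ≤ k ≤ r with |G| ≥ C(r,k). Then for every integer ℓ ≥ 1, the total variation distance satisfies the exact identity SD(D^ℓ, D1) = Pr_{X∼D1}[c(X) > ℓ] · Pr_{X∼D0}[c(X) ≤ ℓ]. Moreover, if 1 + (C(r,k)−1)/|G| ≤ 3 and ℓ ≥ 4, then SD(D^ℓ, D1) ≤ Pr_{X∼D1}[c(X) > ℓ] ≤ Var_{X∼D1}(c(X))/(ℓ−3)²; in particular, if additionally k ≥ 3, 2k ≤ r, r ≥ 2^k·k², and |G| ≥ r^k, then SD(D^ℓ, D1) ≤ 2/(ℓ−3)². -/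
open Finset

/-- Number of k-SUM solutions of an instance `X ∈ G^r`: the number of `k`-element
subsets `S ⊆ {1,…,r}` with `∑_{i∈S} X i = 0`. -/
def numSol {G : Type} [AddCommGroup G] [DecidableEq G] (k : ℕ) {r : ℕ} (X : Fin r → G) : ℕ :=
  (((univ : Finset (Fin r)).powersetCard k).filter (fun S => ∑ i ∈ S, X i = 0)).card

/-- Plant a solution at `S`: replace the entry at the smallest index `i` of `S` by
`-∑_{j∈S, j≠i} Y j`. -/
def plant {G : Type} [AddCommGroup G] {r : ℕ} (Y : Fin r → G) (S : Finset (Fin r)) :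
    Fin r → G :=
  fun j =>
    if hS : S.Nonempty then
      if j = S.min' hS then -∑ i ∈ S.erase (S.min' hS), Y i else Y j
    else Y j

/-- The probability mass function of the planted distribution `D1` on `G^r`:
draw `Y` uniformly from `G^r` and an independent uniformly random `k`-element
subset `S`, and output `plant Y S`. -/
noncomputable def D1pmf {G : Type} [AddCommGroup G] [Fintype G] [DecidableEq G] (k : ℕ)
    {r : ℕ} (X : Fin r → G) : ℝ :=
  (((univ : Finset ((Fin r → G) × Finset (Fin r))).filter
      (fun p => p.2.card = k ∧ plant p.1 p.2 = X)).card : ℝ)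
    / ((Fintype.card G : ℝ) ^ r * (r.choose k : ℝ))

/-- The probability mass function of the uniform distribution `D0` on `G^r`. -/
noncomputable def D0pmf (G : Type) [Fintype G] (r : ℕ) (_X : Fin r → G) : ℝ :=
  1 / (Fintype.card G : ℝ) ^ r

/-- `Pr_{Y∼D1}[c(Y) > ℓ]`: the probability under the planted distribution that
the number of solutions exceeds the real threshold `ℓ`. -/
noncomputable def D1probGt (G : Type) [AddCommGroup G] [Fintype G] [DecidableEq G]
    (k r : ℕ) (ℓ : ℝ) : ℝ :=
  ∑ X ∈ (univ : Finset (Fin r → G)).filter (fun X => ℓ < (numSol k X : ℝ)), D1pmf k X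

/-- The probability mass function of the hybrid distribution `D^ℓ` on `G^r`:
draw `X` from `D1`; if `c(X) ≤ ℓ` output `X`, otherwise output an independent
uniform sample from `G^r`. -/
noncomputable def Dhybpmf (G : Type) [AddCommGroup G] [Fintype G] [DecidableEq G]
    (k r : ℕ) (ℓ : ℝ) (X : Fin r → G) : ℝ :=
  (if (numSol k X : ℝ) ≤ ℓ then D1pmf k X else 0) + D1probGt G k r ℓ * D0pmf G r X

/-- Expectation of the number of k-SUM solutions under the planted distribution `D1`. -/
noncomputable def expD1 (G : Type) [AddCommGroup G] [Fintype G] [DecidableEq G]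
    (k r : ℕ) : ℝ :=
  ∑ X : Fin r → G, D1pmf k X * (numSol k X : ℝ)

/-- Variance of the number of k-SUM solutions under the planted distribution `D1`. -/
noncomputable def varD1 (G : Type) [AddCommGroup G] [Fintype G] [DecidableEq G]
    (k r : ℕ) : ℝ :=
  ∑ X : Fin r → G, D1pmf k X * ((numSol k X : ℝ) - expD1 G k r) ^ 2

/-- Total variation distance between two pmfs on a finite type. -/
noncomputable def SD {α : Type} [Fintype α] (P Q : α → ℝ) : ℝ :=
  (1 / 2) * ∑ X : α, |P X - Q X|



section Aux
variable {G : Type} [AddCommGroup G] [Fintype G] [DecidableEq G] {r : ℕ}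

/-- update coordinate `i` to record the sum over `S`. -/
def updEquiv (i : Fin r) (S : Finset (Fin r)) (hi : i ∈ S) : (Fin r → G) ≃ (Fin r → G) where
  toFun X := Function.update X i (∑ j ∈ S, X j)
  invFun X := Function.update X i (X i - ∑ j ∈ S.erase i, X j)
  left_inv X := by
    funext t
    rcases eq_or_ne t i with rfl | ht
    · simp only [Function.update_self]
      have h1 : ∑ j ∈ S.erase t, Function.update X t (∑ j ∈ S, X j) j
          = ∑ j ∈ S.erase t, X j := by
        refine Finset.sum_congr rfl fun j hj => ?_
        exact Function.update_of_ne (Finset.ne_of_mem_erase hj) _ _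
      rw [h1, ← Finset.add_sum_erase S X hi]
      abel
    · simp [Function.update_of_ne ht]
  right_inv X := by
    funext t
    rcases eq_or_ne t i with rfl | ht
    · simp only [Function.update_self]
      rw [← Finset.add_sum_erase S _ hi]
      have h1 : ∑ j ∈ S.erase t, Function.update X t (X t - ∑ j ∈ S.erase t, X j) j
          = ∑ j ∈ S.erase t, X j := by
        refine Finset.sum_congr rfl fun j hj => ?_
        exact Function.update_of_ne (Finset.ne_of_mem_erase hj) _ _
      rw [h1]
      simp
    · simp [Function.update_of_ne ht]

lemma updEquiv_apply_self (i : Fin r) (S : Finset (Fin r)) (hi : i ∈ S) (X : Fin r → G) :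
    updEquiv i S hi X i = ∑ j ∈ S, X j := by
  simp [updEquiv]

lemma updEquiv_apply_ne (i : Fin r) (S : Finset (Fin r)) (hi : i ∈ S) (X : Fin r → G)
    {t : Fin r} (ht : t ≠ i) : updEquiv i S hi X t = X t := by
  simp [updEquiv, Function.update_of_ne ht]

lemma sum_updEquiv_of_not_mem (i : Fin r) (S : Finset (Fin r)) (hi : i ∈ S) (X : Fin r → G)
    {T : Finset (Fin r)} (hT : i ∉ T) : ∑ j ∈ T, updEquiv i S hi X j = ∑ j ∈ T, X j := by
  refine Finset.sum_congr rfl fun j hj => ?_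
  exact updEquiv_apply_ne _ _ _ _ (fun h => hT (h ▸ hj))

lemma card_filter_equiv (e : (Fin r → G) ≃ (Fin r → G)) (p q : (Fin r → G) → Prop)
    [DecidablePred p] [DecidablePred q] (h : ∀ X, p X ↔ q (e X)) :
    (univ.filter p).card = (univ.filter q).card := by
  refine Finset.card_bij' (fun X _ => e X) (fun Y _ => e.symm Y) ?_ ?_ ?_ ?_
  · intro a ha
    simp only [Finset.mem_filter, Finset.mem_univ, true_and] at ha ⊢
    exact (h a).1 ha
  · intro b hb
    simp only [Finset.mem_filter, Finset.mem_univ, true_and] at hb ⊢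
    exact (h _).2 (by simpa using hb)
  · intros; simp
  · intros; simp

lemma count_zeros (I : Finset (Fin r)) :
    ((univ : Finset (Fin r → G)).filter (fun X => ∀ i ∈ I, X i = 0)).card
      = Fintype.card G ^ (r - I.card) := by
  classical
  rw [Finset.card_filter]
  have h1 : ∀ X : Fin r → G, (if (∀ i ∈ I, X i = 0) then (1:ℕ) else 0)
      = ∏ i, (if i ∈ I then (if X i = 0 then 1 else 0) else 1) := by
    intro X
    rw [Fintype.prod_ite_mem I (fun i => if X i = 0 then (1:ℕ) else 0),
      Finset.prod_boole]
    simp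
  simp only [h1]
  rw [← Fintype.piFinset_univ]
  rw [(Finset.prod_univ_sum (fun _ : Fin r => (univ : Finset G))
    (fun i x => if i ∈ I then (if x = 0 then (1:ℕ) else 0) else 1)).symm]
  have h2 : ∀ i : Fin r, (∑ x : G, (if i ∈ I then (if x = 0 then (1:ℕ) else 0) else 1))
      = if i ∈ I then 1 else Fintype.card G := by
    intro i
    by_cases hi : i ∈ I
    · simp [hi]
    · simp [hi, Finset.card_univ]
  simp only [h2]
  rw [Finset.prod_ite, Finset.prod_const_one, Finset.prod_const, one_mul]
  congr 1
  have : (filter (fun x => x ∉ I) univ) = Iᶜ := by ext i; simp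
  rw [this, Finset.card_compl, Fintype.card_fin]

lemma card_one {S : Finset (Fin r)} {i : Fin r} (hi : i ∈ S) :
    ((univ : Finset (Fin r → G)).filter (fun X => ∑ j ∈ S, X j = 0)).card
      = Fintype.card G ^ (r - 1) := by
  rw [card_filter_equiv (updEquiv i S hi) _ (fun X => ∀ t ∈ ({i} : Finset (Fin r)), X t = 0)
    (fun X => by simp [updEquiv_apply_self i S hi X])]
  rw [count_zeros, Finset.card_singleton]

lemma card_two {S T : Finset (Fin r)} {i j : Fin r} (hiS : i ∈ S) (hiT : i ∉ T) (hjT : j ∈ T) :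
    ((univ : Finset (Fin r → G)).filter
      (fun X => ∑ t ∈ S, X t = 0 ∧ ∑ t ∈ T, X t = 0)).card = Fintype.card G ^ (r - 2) := by
  have hij : i ≠ j := fun h => hiT (h ▸ hjT)
  set e : (Fin r → G) ≃ (Fin r → G) := (updEquiv i S hiS).trans (updEquiv j T hjT) with he
  have key : ∀ X : Fin r → G, (∑ t ∈ S, X t = 0 ∧ ∑ t ∈ T, X t = 0)
      ↔ (∀ t ∈ ({i, j} : Finset (Fin r)), e X t = 0) := by
    intro X
    have h1 : e X i = ∑ t ∈ S, X t := by
      rw [he, Equiv.trans_apply, updEquiv_apply_ne _ _ _ _ hij,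
        updEquiv_apply_self]
    have h2 : e X j = ∑ t ∈ T, X t := by
      rw [he, Equiv.trans_apply, updEquiv_apply_self,
        sum_updEquiv_of_not_mem i S hiS X hiT]
    simp only [Finset.mem_insert, Finset.mem_singleton]
    constructor
    · rintro ⟨hS0, hT0⟩ t (rfl | rfl)
      · rw [h1]; exact hS0
      · rw [h2]; exact hT0
    · intro h
      exact ⟨by rw [← h1]; exact h i (Or.inl rfl), by rw [← h2]; exact h j (Or.inr rfl)⟩
  rw [card_filter_equiv e (fun X => ∑ t ∈ S, X t = 0 ∧ ∑ t ∈ T, X t = 0)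
    (fun X => ∀ t ∈ ({i, j} : Finset (Fin r)), X t = 0) key, count_zeros]
  congr 2
  rw [Finset.card_insert_of_notMem (by simpa using hij), Finset.card_singleton]

lemma card_three {A B C : Finset (Fin r)} {i j m : Fin r}
    (hiA : i ∈ A) (hiB : i ∉ B) (hiC : i ∉ C) (hjB : j ∈ B) (hjC : j ∉ C) (hmC : m ∈ C) :
    ((univ : Finset (Fin r → G)).filter
      (fun X => ∑ t ∈ A, X t = 0 ∧ ∑ t ∈ B, X t = 0 ∧ ∑ t ∈ C, X t = 0)).card
      = Fintype.card G ^ (r - 3) := by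
  have hij : i ≠ j := fun h => hiB (h ▸ hjB)
  have him : i ≠ m := fun h => hiC (h ▸ hmC)
  have hjm : j ≠ m := fun h => hjC (h ▸ hmC)
  set e : (Fin r → G) ≃ (Fin r → G) := ((updEquiv i A hiA).trans (updEquiv j B hjB)).trans (updEquiv m C hmC) with he
  have key : ∀ X : Fin r → G,
      (∑ t ∈ A, X t = 0 ∧ ∑ t ∈ B, X t = 0 ∧ ∑ t ∈ C, X t = 0)
      ↔ (∀ t ∈ ({i, j, m} : Finset (Fin r)), e X t = 0) := by
    intro X
    have h1 : e X i = ∑ t ∈ A, X t := by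
      rw [he, Equiv.trans_apply, Equiv.trans_apply, updEquiv_apply_ne _ _ _ _ him,
        updEquiv_apply_ne _ _ _ _ hij, updEquiv_apply_self]
    have h2 : e X j = ∑ t ∈ B, X t := by
      rw [he, Equiv.trans_apply, Equiv.trans_apply, updEquiv_apply_ne _ _ _ _ hjm,
        updEquiv_apply_self, sum_updEquiv_of_not_mem i A hiA X hiB]
    have h3 : e X m = ∑ t ∈ C, X t := by
      rw [he, Equiv.trans_apply, Equiv.trans_apply, updEquiv_apply_self,
        sum_updEquiv_of_not_mem j B hjB _ hjC, sum_updEquiv_of_not_mem i A hiA X hiC]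
    simp only [Finset.mem_insert, Finset.mem_singleton]
    constructor
    · rintro ⟨hA0, hB0, hC0⟩ t (rfl | rfl | rfl)
      · rw [h1]; exact hA0
      · rw [h2]; exact hB0
      · rw [h3]; exact hC0
    · intro h
      exact ⟨by rw [← h1]; exact h i (Or.inl rfl),
        by rw [← h2]; exact h j (Or.inr (Or.inl rfl)),
        by rw [← h3]; exact h m (Or.inr (Or.inr rfl))⟩
  rw [card_filter_equiv e
    (fun X => ∑ t ∈ A, X t = 0 ∧ ∑ t ∈ B, X t = 0 ∧ ∑ t ∈ C, X t = 0)
    (fun X => ∀ t ∈ ({i, j, m} : Finset (Fin r)), X t = 0) key, count_zeros]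
  congr 2
  rw [Finset.card_insert_of_notMem, Finset.card_insert_of_notMem
    (by simpa using hjm), Finset.card_singleton]
  simp [hij, him]

end Aux
section Moments
variable {G : Type} [AddCommGroup G] [Fintype G] [DecidableEq G] {r k : ℕ}

private lemma booleMul (p q : Prop) [Decidable p] [Decidable q] :
    (if p then (1:ℕ) else 0) * (if q then 1 else 0) = if p ∧ q then 1 else 0 := by
  by_cases hp : p <;> by_cases hq : q <;> simp [hp, hq]

lemma numSol_eq_sum (X : Fin r → G) : numSol k X
    = ∑ S ∈ (univ : Finset (Fin r)).powersetCard k,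
        (if ∑ i ∈ S, X i = 0 then (1:ℕ) else 0) :=
  Finset.card_filter _ _

lemma K_card : ((univ : Finset (Fin r)).powersetCard k).card = r.choose k := by
  rw [Finset.card_powersetCard, Finset.card_univ, Fintype.card_fin]

lemma mem_K_card {S : Finset (Fin r)} (hS : S ∈ (univ : Finset (Fin r)).powersetCard k) :
    S.card = k := (Finset.mem_powersetCard.1 hS).2

lemma mem_K_nonempty (hk : 1 ≤ k) {S : Finset (Fin r)}
    (hS : S ∈ (univ : Finset (Fin r)).powersetCard k) : S.Nonempty :=
  Finset.card_pos.1 (by rw [mem_K_card hS]; omega)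

lemma exists_mem_not_mem {S T : Finset (Fin r)}
    (hS : S ∈ (univ : Finset (Fin r)).powersetCard k)
    (hT : T ∈ (univ : Finset (Fin r)).powersetCard k) (hne : S ≠ T) :
    ∃ i ∈ S, i ∉ T := by
  rw [← Finset.not_subset]
  intro h
  exact hne (Finset.eq_of_subset_of_card_le h (by rw [mem_K_card hS, mem_K_card hT]))

lemma sum1 (hk : 1 ≤ k) :
    ∑ X : Fin r → G, numSol k X = r.choose k * Fintype.card G ^ (r - 1) := by
  simp only [numSol_eq_sum]
  rw [Finset.sum_comm]
  rw [Finset.sum_congr rfl (fun S hS => ?_), Finset.sum_const, K_card, smul_eq_mul]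
  obtain ⟨i, hi⟩ := mem_K_nonempty hk hS
  rw [← Finset.card_filter]
  exact card_one hi

lemma sum2 (hk : 1 ≤ k) :
    ∑ X : Fin r → G, (numSol k X) ^ 2
      = r.choose k * Fintype.card G ^ (r - 1)
        + r.choose k * (r.choose k - 1) * Fintype.card G ^ (r - 2) := by
  set K := (univ : Finset (Fin r)).powersetCard k with hK
  have expand : ∀ X : Fin r → G, (numSol k X) ^ 2
      = ∑ S ∈ K, ∑ T ∈ K, (if (∑ i ∈ S, X i = 0 ∧ ∑ i ∈ T, X i = 0) then (1:ℕ) else 0) := by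
    intro X
    rw [numSol_eq_sum, sq, Finset.sum_mul_sum]
    simp only [booleMul]
    rfl
  simp only [expand]
  rw [Finset.sum_comm]
  rw [Finset.sum_congr rfl (fun S hS => ?_), Finset.sum_const, K_card, smul_eq_mul, mul_add,
    mul_assoc]
  -- inner : ∑ X ∑ T  ... = q^(r-1) + (C-1) * q^(r-2)
  rw [Finset.sum_comm]
  rw [← Finset.add_sum_erase K _ hS]
  congr 1
  · rw [← Finset.card_filter]
    have : (univ : Finset (Fin r → G)).filter
        (fun X => ∑ i ∈ S, X i = 0 ∧ ∑ i ∈ S, X i = 0)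
        = (univ : Finset (Fin r → G)).filter (fun X => ∑ i ∈ S, X i = 0) := by
      ext X; simp
    rw [this]
    obtain ⟨i, hi⟩ := mem_K_nonempty hk hS
    exact card_one hi
  · rw [Finset.sum_congr rfl (fun T hT => ?_), Finset.sum_const, smul_eq_mul,
      Finset.card_erase_of_mem hS, K_card]
    obtain ⟨i, hiS, hiT⟩ := exists_mem_not_mem hS (Finset.mem_of_mem_erase hT)
      (Finset.ne_of_mem_erase hT).symm
    obtain ⟨j, hj⟩ := mem_K_nonempty hk (Finset.mem_of_mem_erase hT)
    rw [← Finset.card_filter]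
    exact card_two hiS hiT hj

end Moments

section Third
variable {G : Type} [AddCommGroup G] [Fintype G] [DecidableEq G] {r k : ℕ}

lemma N_le_two {S T U : Finset (Fin r)} {i j : Fin r}
    (hiS : i ∈ S) (hiT : i ∉ T) (hjT : j ∈ T) :
    ((univ : Finset (Fin r → G)).filter
      (fun X => ∑ t ∈ S, X t = 0 ∧ ∑ t ∈ T, X t = 0 ∧ ∑ t ∈ U, X t = 0)).card
      ≤ Fintype.card G ^ (r - 2) := by
  rw [← card_two (G := G) hiS hiT hjT]
  apply Finset.card_le_card
  intro X hX
  simp only [Finset.mem_filter] at hX ⊢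
  exact ⟨hX.1, hX.2.1, hX.2.2.1⟩

lemma N_good (hk : 1 ≤ k) {S T U : Finset (Fin r)}
    (hS : S ∈ (univ : Finset (Fin r)).powersetCard k)
    (hT : T ∈ (univ : Finset (Fin r)).powersetCard k)
    (hU : U ∈ (univ : Finset (Fin r)).powersetCard k)
    (hST : S ≠ T) (hUS : U ≠ S) (hUT : U ≠ T)
    (hbad : ¬((S \ T ∪ T \ S) ⊆ U ∧ U ⊆ S ∪ T)) :
    ((univ : Finset (Fin r → G)).filter
      (fun X => ∑ t ∈ S, X t = 0 ∧ ∑ t ∈ T, X t = 0 ∧ ∑ t ∈ U, X t = 0)).card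
      = Fintype.card G ^ (r - 3) := by
  by_cases hsub : U ⊆ S ∪ T
  · have hD : ¬ (S \ T ∪ T \ S) ⊆ U := fun h => hbad ⟨h, hsub⟩
    obtain ⟨x, hxD, hxU⟩ := Finset.not_subset.1 hD
    rcases Finset.mem_union.1 hxD with hx | hx
    · have hxS := (Finset.mem_sdiff.1 hx).1
      have hxT := (Finset.mem_sdiff.1 hx).2
      obtain ⟨j, hjT, hjU⟩ := exists_mem_not_mem hT hU (fun h => hUT h.symm)
      obtain ⟨m, hm⟩ := mem_K_nonempty hk hU
      exact card_three hxS hxT hxU hjT hjU hm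
    · have hxT := (Finset.mem_sdiff.1 hx).1
      have hxS := (Finset.mem_sdiff.1 hx).2
      obtain ⟨j, hjS, hjU⟩ := exists_mem_not_mem hS hU (fun h => hUS h.symm)
      obtain ⟨m, hm⟩ := mem_K_nonempty hk hU
      rw [← card_three (G := G) hxT hxS hxU hjS hjU hm]
      congr 1
      ext X
      simp only [Finset.mem_filter]
      tauto
  · obtain ⟨x, hxU, hxST⟩ := Finset.not_subset.1 hsub
    have hxS : x ∉ S := fun h => hxST (Finset.mem_union_left _ h)
    have hxT : x ∉ T := fun h => hxST (Finset.mem_union_right _ h)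
    obtain ⟨j, hjS, hjT⟩ := exists_mem_not_mem hS hT hST
    obtain ⟨m, hm⟩ := mem_K_nonempty hk hT
    rw [← card_three (G := G) hxU hxS hxT hjS hjT hm]
    congr 1
    ext X
    simp only [Finset.mem_filter]
    tauto

lemma bad_card {S T : Finset (Fin r)} (hS : S ∈ (univ : Finset (Fin r)).powersetCard k) :
    (((univ : Finset (Fin r)).powersetCard k).filter
      (fun U => U = S ∨ U = T ∨ ((S \ T ∪ T \ S) ⊆ U ∧ U ⊆ S ∪ T))).card ≤ 2 ^ k + 2 := by
  set P' := ((univ : Finset (Fin r)).powersetCard k).filter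
      (fun U => (S \ T ∪ T \ S) ⊆ U ∧ U ⊆ S ∪ T) with hP'
  have hsub : (((univ : Finset (Fin r)).powersetCard k).filter
      (fun U => U = S ∨ U = T ∨ ((S \ T ∪ T \ S) ⊆ U ∧ U ⊆ S ∪ T)))
      ⊆ insert S (insert T P') := by
    intro U hU
    simp only [Finset.mem_filter, Finset.mem_insert, hP'] at hU ⊢
    tauto
  have hP'card : P'.card ≤ 2 ^ k := by
    have key : ∀ U ∈ P', U = (S \ T ∪ T \ S) ∪ ((U ∩ S) ∩ T) := by
      intro U hU
      simp only [hP', Finset.mem_filter] at hU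
      obtain ⟨-, hD, hUsub⟩ := hU
      apply Finset.Subset.antisymm
      · intro x hx
        have hx2 := hUsub hx
        simp only [Finset.mem_union, Finset.mem_sdiff, Finset.mem_inter] at hx2 ⊢
        by_cases hxS : x ∈ S <;> by_cases hxT : x ∈ T <;> tauto
      · apply Finset.union_subset hD
        intro x hx
        simp only [Finset.mem_inter] at hx
        exact hx.1.1
    have : P'.card ≤ S.powerset.card := by
      apply Finset.card_le_card_of_injOn (fun U => U ∩ S)
      · intro U hU
        exact Finset.mem_powerset.2 Finset.inter_subset_right
      · intro U1 h1 U2 h2 he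
        rw [key U1 h1, key U2 h2]
        simp only at he
        rw [he]
    rwa [Finset.card_powerset, mem_K_card hS] at this
  calc _ ≤ (insert S (insert T P')).card := Finset.card_le_card hsub
    _ ≤ (insert T P').card + 1 := Finset.card_insert_le _ _
    _ ≤ P'.card + 1 + 1 := by
        have := Finset.card_insert_le T P'
        omega
    _ ≤ 2 ^ k + 2 := by omega

end Third

section Sum3
variable {G : Type} [AddCommGroup G] [Fintype G] [DecidableEq G] {r k : ℕ}

lemma sum_ite_card (p : (Fin r → G) → Prop) [DecidablePred p] :
    ∑ X : Fin r → G, (if p X then (1:ℕ) else 0) = ((univ : Finset (Fin r → G)).filter p).card :=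
  (Finset.card_filter _ _).symm

lemma sum3 (hk : 1 ≤ k) :
    ∑ X : Fin r → G, (numSol k X) ^ 3
      ≤ r.choose k * (Fintype.card G ^ (r - 1)
          + (r.choose k - 1) * Fintype.card G ^ (r - 2)
          + (r.choose k - 1) * ((2 ^ k + 2) * Fintype.card G ^ (r - 2)
              + r.choose k * Fintype.card G ^ (r - 3))) := by
  set K := (univ : Finset (Fin r)).powersetCard k with hK
  set q := Fintype.card G with hq
  have expand : ∀ X : Fin r → G, (numSol k X) ^ 3 = ∑ S ∈ K, ∑ T ∈ K, ∑ U ∈ K,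
      (if (∑ i ∈ S, X i = 0 ∧ ∑ i ∈ T, X i = 0 ∧ ∑ i ∈ U, X i = 0) then (1:ℕ) else 0) := by
    intro X
    have h3 : (numSol k X)^3 = numSol k X * numSol k X * numSol k X := by ring
    rw [h3, numSol_eq_sum, Finset.sum_mul_sum, Finset.sum_mul]
    refine Finset.sum_congr rfl fun S hS => ?_
    rw [Finset.sum_mul]
    refine Finset.sum_congr rfl fun T hT => ?_
    rw [Finset.mul_sum]
    refine Finset.sum_congr rfl fun U hU => ?_
    rw [booleMul, booleMul]
    simp only [and_assoc]
  simp only [expand]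
  rw [Finset.sum_comm]
  have hmain : ∀ S ∈ K, (∑ X : Fin r → G, ∑ T ∈ K, ∑ U ∈ K,
      (if (∑ i ∈ S, X i = 0 ∧ ∑ i ∈ T, X i = 0 ∧ ∑ i ∈ U, X i = 0) then (1:ℕ) else 0))
      ≤ q ^ (r - 1) + (r.choose k - 1) * q ^ (r - 2)
          + (r.choose k - 1) * ((2 ^ k + 2) * q ^ (r - 2) + r.choose k * q ^ (r - 3)) := by
    intro S hS
    rw [Finset.sum_comm, ← Finset.add_sum_erase K _ hS]
    apply add_le_add
    · -- T = S diagonal block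
      rw [Finset.sum_comm, ← Finset.add_sum_erase K _ hS]
      apply add_le_add
      · apply le_of_eq
        rw [sum_ite_card]
        have hfil : (univ : Finset (Fin r → G)).filter
            (fun X => ∑ i ∈ S, X i = 0 ∧ ∑ i ∈ S, X i = 0 ∧ ∑ i ∈ S, X i = 0)
            = (univ : Finset (Fin r → G)).filter (fun X => ∑ i ∈ S, X i = 0) := by
          ext X; simp only [Finset.mem_filter]; tauto
        rw [hfil]
        obtain ⟨i, hi⟩ := mem_K_nonempty hk hS
        exact card_one hi
      · calc _ ≤ ∑ _U ∈ K.erase S, q ^ (r - 2) := by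
              refine Finset.sum_le_sum fun U hU => ?_
              apply le_of_eq
              rw [sum_ite_card]
              have hUK := Finset.mem_of_mem_erase hU
              have hne : U ≠ S := Finset.ne_of_mem_erase hU
              have hfil : (univ : Finset (Fin r → G)).filter
                  (fun X => ∑ i ∈ S, X i = 0 ∧ ∑ i ∈ S, X i = 0 ∧ ∑ i ∈ U, X i = 0)
                  = (univ : Finset (Fin r → G)).filter
                    (fun X => ∑ i ∈ S, X i = 0 ∧ ∑ i ∈ U, X i = 0) := by
                ext X; simp only [Finset.mem_filter]; tauto
              rw [hfil]
              obtain ⟨i, hiS, hiU⟩ := exists_mem_not_mem hS hUK hne.symm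
              obtain ⟨j, hj⟩ := mem_K_nonempty hk hUK
              exact card_two hiS hiU hj
          _ ≤ (r.choose k - 1) * q ^ (r - 2) := by
              rw [Finset.sum_const, smul_eq_mul, Finset.card_erase_of_mem hS, K_card]
    · -- T ≠ S
      have hinner : ∀ T ∈ K.erase S, (∑ X : Fin r → G, ∑ U ∈ K,
          (if (∑ i ∈ S, X i = 0 ∧ ∑ i ∈ T, X i = 0 ∧ ∑ i ∈ U, X i = 0) then (1:ℕ) else 0))
          ≤ (2 ^ k + 2) * q ^ (r - 2) + r.choose k * q ^ (r - 3) := by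
        intro T hT
        have hTK := Finset.mem_of_mem_erase hT
        have hne : S ≠ T := (Finset.ne_of_mem_erase hT).symm
        rw [Finset.sum_comm,
          ← Finset.sum_filter_add_sum_filter_not K
            (fun U => U = S ∨ U = T ∨ ((S \ T ∪ T \ S) ⊆ U ∧ U ⊆ S ∪ T))]
        apply add_le_add
        · obtain ⟨i, hiS, hiT⟩ := exists_mem_not_mem hS hTK hne
          obtain ⟨j, hj⟩ := mem_K_nonempty hk hTK
          calc _ ≤ ∑ _U ∈ K.filter (fun U => U = S ∨ U = T ∨
                  ((S \ T ∪ T \ S) ⊆ U ∧ U ⊆ S ∪ T)), q ^ (r - 2) := by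
                refine Finset.sum_le_sum fun U hU => ?_
                rw [sum_ite_card]
                exact N_le_two hiS hiT hj
            _ ≤ (2 ^ k + 2) * q ^ (r - 2) := by
                rw [Finset.sum_const, smul_eq_mul]
                exact Nat.mul_le_mul_right _ (bad_card hS)
        · calc _ ≤ ∑ _U ∈ K.filter (fun U => ¬(U = S ∨ U = T ∨
                  ((S \ T ∪ T \ S) ⊆ U ∧ U ⊆ S ∪ T))), q ^ (r - 3) := by
                refine Finset.sum_le_sum fun U hU => ?_
                apply le_of_eq
                rw [sum_ite_card]
                obtain ⟨hUK, hUnot⟩ := Finset.mem_filter.1 hU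
                push_neg at hUnot
                refine N_good hk hS hTK hUK hne hUnot.1 hUnot.2.1 (fun hc => ?_)
                exact hUnot.2.2 hc.1 hc.2
            _ ≤ r.choose k * q ^ (r - 3) := by
                rw [Finset.sum_const, smul_eq_mul]
                refine Nat.mul_le_mul_right _ ?_
                calc _ ≤ K.card := Finset.card_le_card (Finset.filter_subset _ _)
                  _ = r.choose k := K_card
      calc _ ≤ ∑ _T ∈ K.erase S, ((2 ^ k + 2) * q ^ (r - 2) + r.choose k * q ^ (r - 3)) :=
            Finset.sum_le_sum hinner
        _ = (r.choose k - 1) * ((2 ^ k + 2) * q ^ (r - 2) + r.choose k * q ^ (r - 3)) := by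
            rw [Finset.sum_const, smul_eq_mul, Finset.card_erase_of_mem hS, K_card]
  calc _ ≤ ∑ _S ∈ K, (q ^ (r - 1) + (r.choose k - 1) * q ^ (r - 2)
          + (r.choose k - 1) * ((2 ^ k + 2) * q ^ (r - 2) + r.choose k * q ^ (r - 3))) :=
        Finset.sum_le_sum hmain
    _ = _ := by rw [Finset.sum_const, K_card, smul_eq_mul]

end Sum3

section Pmf
variable {G : Type} [AddCommGroup G] [Fintype G] [DecidableEq G] {r k : ℕ}

lemma card_plant_fiber (hk : 1 ≤ k) (X : Fin r → G) :
    ((univ : Finset ((Fin r → G) × Finset (Fin r))).filter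
      (fun p => p.2.card = k ∧ plant p.1 p.2 = X)).card = numSol k X * Fintype.card G := by
  rw [Finset.card_filter, Fintype.sum_prod_type, Finset.sum_comm]
  have inner : ∀ S : Finset (Fin r),
      (∑ Y : Fin r → G, if (S.card = k ∧ plant Y S = X) then (1:ℕ) else 0)
      = if (S.card = k ∧ ∑ i ∈ S, X i = 0) then Fintype.card G else 0 := by
    intro S
    by_cases hSk : S.card = k
    · have hne : S.Nonempty := Finset.card_pos.1 (by omega)
      set i := S.min' hne with hi
      have hiS : i ∈ S := S.min'_mem hne
      have hplant : ∀ Y : Fin r → G, plant Y S = X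
          ↔ ((∀ j, j ≠ i → Y j = X j) ∧ ∑ t ∈ S, X t = 0) := by
        intro Y
        constructor
        · intro h
          have hoff : ∀ j, j ≠ i → Y j = X j := by
            intro j hj
            have := congrFun h j
            simpa [plant, hne, ← hi, hj] using this
          refine ⟨hoff, ?_⟩
          have hXi : X i = -∑ t ∈ S.erase i, Y t := by
            have := congrFun h i
            simpa [plant, hne, ← hi] using this.symm
          have herase : ∑ t ∈ S.erase i, Y t = ∑ t ∈ S.erase i, X t :=
            Finset.sum_congr rfl fun t ht => hoff t (Finset.ne_of_mem_erase ht)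
          rw [← Finset.add_sum_erase S X hiS, hXi, herase]
          abel
        · rintro ⟨hoff, hsum⟩
          funext j
          by_cases hj : j = i
          · subst hj
            have herase : ∑ t ∈ S.erase i, Y t = ∑ t ∈ S.erase i, X t :=
              Finset.sum_congr rfl fun t ht => hoff t (Finset.ne_of_mem_erase ht)
            have hXi2 : X i = -∑ t ∈ S.erase i, X t := by
              rw [← Finset.add_sum_erase S X hiS] at hsum
              linear_combination (norm := abel) hsum
            simp [plant, hne, ← hi, herase, ← hXi2]
          · simp [plant, hne, ← hi, hj, hoff j hj]
      by_cases hsum : ∑ t ∈ S, X t = 0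
      · rw [if_pos ⟨hSk, hsum⟩]
        have : ∀ Y : Fin r → G, (S.card = k ∧ plant Y S = X) ↔ (∀ j, j ≠ i → Y j = X j) := by
          intro Y
          rw [hplant Y]
          exact ⟨fun h => h.2.1, fun h => ⟨hSk, h, hsum⟩⟩
        simp only [this]
        rw [sum_ite_card]
        rw [← Finset.card_univ (α := G)]
        refine Finset.card_bij' (fun Y _ => Y i) (fun g _ => Function.update X i g)
          (fun _ _ => Finset.mem_univ _) (fun _ _ => Finset.mem_filter.2
            ⟨Finset.mem_univ _, fun j hj => Function.update_of_ne hj _ _⟩) ?_ ?_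
        · intro Y hY
          funext j
          by_cases hj : j = i
          · subst hj; simp
          · show Function.update X i (Y i) j = Y j
            rw [Function.update_of_ne hj]
            exact ((Finset.mem_filter.1 hY).2 j hj).symm
        · intro g _
          simp
      · rw [if_neg (fun h => hsum h.2)]
        refine Finset.sum_eq_zero fun Y _ => ?_
        rw [if_neg]
        rintro ⟨-, hp⟩
        exact hsum ((hplant Y).1 hp).2
    · simp [hSk]
  simp only [inner]
  rw [Finset.sum_ite, Finset.sum_const_zero, add_zero, Finset.sum_const, smul_eq_mul]
  congr 1
  rw [numSol]
  congr 1
  ext S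
  simp only [Finset.mem_filter, Finset.mem_powersetCard, Finset.mem_univ, true_and,
    Finset.subset_univ]

lemma D1pmf_eq (hk : 1 ≤ k) (hkr : k ≤ r) (X : Fin r → G) :
    D1pmf k X = (numSol k X : ℝ)
      / ((r.choose k : ℝ) * (Fintype.card G : ℝ) ^ (r - 1)) := by
  have hq : (0:ℝ) < (Fintype.card G : ℝ) := by exact_mod_cast Fintype.card_pos
  have hC : (0:ℝ) < (r.choose k : ℝ) := by exact_mod_cast Nat.choose_pos hkr
  have hpow : (Fintype.card G : ℝ) ^ r = (Fintype.card G : ℝ) ^ (r - 1) * Fintype.card G := by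
    rw [← pow_succ]
    congr 1
    omega
  rw [D1pmf, card_plant_fiber hk]
  push_cast
  rw [hpow]
  have h1 : (Fintype.card G : ℝ) ^ (r-1) ≠ 0 := by positivity
  field_simp

end Pmf

section RealFacts
variable {G : Type} [AddCommGroup G] [Fintype G] [DecidableEq G] {r k : ℕ}

lemma D1pmf_nonneg (X : Fin r → G) : 0 ≤ D1pmf k X := by
  rw [D1pmf]
  positivity

lemma sum_D1pmf (hk : 1 ≤ k) (hkr : k ≤ r) : ∑ X : Fin r → G, D1pmf k X = 1 := by
  have hC : (0:ℝ) < (r.choose k : ℝ) := by exact_mod_cast Nat.choose_pos hkr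
  have hq : (0:ℝ) < (Fintype.card G : ℝ) := by exact_mod_cast Fintype.card_pos
  simp only [D1pmf_eq hk hkr]
  rw [← Finset.sum_div]
  rw [← Nat.cast_sum _ _, sum1 hk]
  push_cast
  field_simp

lemma sum_D1pmf_mul_numSol (hk : 1 ≤ k) (hkr : k ≤ r) :
    expD1 G k r = ((r.choose k * Fintype.card G ^ (r-1)
        + r.choose k * (r.choose k - 1) * Fintype.card G ^ (r-2) : ℕ) : ℝ)
      / ((r.choose k : ℝ) * (Fintype.card G : ℝ) ^ (r-1)) := by
  rw [expD1]
  simp only [D1pmf_eq hk hkr]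
  have : ∀ X : Fin r → G, (numSol k X : ℝ)
        / ((r.choose k : ℝ) * (Fintype.card G : ℝ) ^ (r-1)) * (numSol k X : ℝ)
      = ((numSol k X : ℝ) * (numSol k X : ℝ))
        / ((r.choose k : ℝ) * (Fintype.card G : ℝ) ^ (r-1)) := by
    intro X; ring
  simp only [this]
  rw [← Finset.sum_div]
  congr 1
  rw [← sum2 (G := G) (r := r) hk]
  push_cast
  exact Finset.sum_congr rfl fun X _ => by rw [sq]

lemma varD1_eq (hk : 1 ≤ k) (hkr : k ≤ r) :
    varD1 G k r = (∑ X : Fin r → G, ((numSol k X : ℝ)) ^ 3)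
        / ((r.choose k : ℝ) * (Fintype.card G : ℝ) ^ (r-1)) - (expD1 G k r) ^ 2 := by
  have h1 : ∑ X : Fin r → G, D1pmf k X = 1 := sum_D1pmf hk hkr
  have h2 : ∑ X : Fin r → G, D1pmf k X * (numSol k X : ℝ) = expD1 G k r := rfl
  rw [varD1]
  have expand : ∀ X : Fin r → G, D1pmf k X * ((numSol k X : ℝ) - expD1 G k r) ^ 2
      = (D1pmf k X * (numSol k X : ℝ) ^ 2
          - 2 * expD1 G k r * (D1pmf k X * (numSol k X : ℝ)))
        + (expD1 G k r) ^ 2 * D1pmf k X := by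
    intro X; ring
  simp only [expand]
  rw [Finset.sum_add_distrib, Finset.sum_sub_distrib, ← Finset.mul_sum, ← Finset.mul_sum,
    h1, h2, mul_one]
  have h3 : ∀ X : Fin r → G, D1pmf k X * (numSol k X : ℝ) ^ 2
      = (numSol k X : ℝ) ^ 3 / ((r.choose k : ℝ) * (Fintype.card G : ℝ) ^ (r-1)) := by
    intro X
    rw [D1pmf_eq hk hkr]
    ring
  simp only [h3]
  rw [← Finset.sum_div]
  ring

end RealFacts

section Exp
variable {G : Type} [AddCommGroup G] [Fintype G] [DecidableEq G] {r k : ℕ}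

lemma expD1_eq_of (hk : 1 ≤ k) (hkr : k ≤ r) (hr : 2 ≤ r) :
    expD1 G k r = 1 + ((r.choose k : ℝ) - 1) / (Fintype.card G : ℝ) := by
  have hC : 1 ≤ r.choose k := Nat.choose_pos hkr
  have hq : (0:ℝ) < (Fintype.card G : ℝ) := by exact_mod_cast Fintype.card_pos
  have hCR : (0:ℝ) < (r.choose k : ℝ) := by exact_mod_cast hC
  rw [sum_D1pmf_mul_numSol hk hkr]
  have hpow : (Fintype.card G : ℝ) ^ (r-1) = (Fintype.card G : ℝ) ^ (r-2) * Fintype.card G := by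
    rw [← pow_succ]
    congr 1
    omega
  have hp2 : (0:ℝ) < (Fintype.card G : ℝ) ^ (r-2) := by positivity
  push_cast [Nat.cast_sub hC]
  rw [hpow]
  field_simp

lemma expD1_le (hk : 1 ≤ k) (hkr : k ≤ r) :
    expD1 G k r ≤ 1 + ((r.choose k : ℝ) - 1) / (Fintype.card G : ℝ) := by
  by_cases hr : 2 ≤ r
  · exact le_of_eq (expD1_eq_of hk hkr hr)
  · have hr1 : r = 1 := by omega
    subst hr1
    have hk1 : k = 1 := by omega
    subst hk1
    rw [sum_D1pmf_mul_numSol le_rfl le_rfl]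
    have hq : (0:ℝ) < (Fintype.card G : ℝ) := by exact_mod_cast Fintype.card_pos
    simp [Nat.choose_self]

lemma fact_mul_choose_le (hkr : k ≤ r) : k.factorial * r.choose k ≤ r ^ k := by
  rw [← Nat.descFactorial_eq_factorial_mul_choose]
  exact Nat.descFactorial_le_pow _ _

lemma two_pow_add_two_le {k : ℕ} (hk3 : 3 ≤ k) : 2 ^ k + 2 ≤ 2 * k.factorial := by
  induction k with
  | zero => omega
  | succ n ih =>
    rcases Nat.lt_or_ge n 3 with hn | hn
    · interval_cases n <;> simp_all [Nat.factorial] <;> omega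
    · have h1 := ih hn
      rw [pow_succ, Nat.factorial_succ]
      have h2 : 1 ≤ n.factorial := Nat.one_le_iff_ne_zero.2 n.factorial_ne_zero
      nlinarith

end Exp

set_option maxHeartbeats 2000000 in
/-- **Statistical distance between `D^ℓ` and `D1`.**
For an integer `ℓ ≥ 1` and `|G| ≥ C(r,k)`:
`SD(D^ℓ, D1) = Pr_{X∼D1}[c(X) > ℓ]·Pr_{X∼D0}[c(X) ≤ ℓ]` exactly. Moreover, if
`1 + (C(r,k)−1)/|G| ≤ 3` and `ℓ ≥ 4`, then
`SD(D^ℓ, D1) ≤ Pr_{X∼D1}[c(X) > ℓ] ≤ Var_{X∼D1}(c(X))/(ℓ−3)²`; in particular,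
if additionally `k ≥ 3`, `2k ≤ r`, `r ≥ 2^k·k²`, and `|G| ≥ r^k`, then
`SD(D^ℓ, D1) ≤ 2/(ℓ−3)²`. -/
theorem SD_Dhyb_D1
    (G : Type) [AddCommGroup G] [Fintype G] [DecidableEq G]
    (k r : ℕ) (hk : 1 ≤ k) (hkr : k ≤ r)
    (hG : r.choose k ≤ Fintype.card G) (ℓ : ℕ) (hℓ : 1 ≤ ℓ) :
    (SD (Dhybpmf G k r (ℓ : ℝ)) (fun X : Fin r → G => D1pmf k X)
        = D1probGt G k r (ℓ : ℝ)
            * ((((univ : Finset (Fin r → G)).filter (fun X => numSol k X ≤ ℓ)).card : ℝ)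
                / (Fintype.card G : ℝ) ^ r))
    ∧ (1 + ((r.choose k : ℝ) - 1) / (Fintype.card G : ℝ) ≤ 3 → 4 ≤ ℓ →
        (SD (Dhybpmf G k r (ℓ : ℝ)) (fun X : Fin r → G => D1pmf k X)
            ≤ D1probGt G k r (ℓ : ℝ)
        ∧ D1probGt G k r (ℓ : ℝ) ≤ varD1 G k r / ((ℓ : ℝ) - 3) ^ 2
        ∧ (3 ≤ k → 2 * k ≤ r → 2 ^ k * k ^ 2 ≤ r → r ^ k ≤ Fintype.card G →
            SD (Dhybpmf G k r (ℓ : ℝ)) (fun X : Fin r → G => D1pmf k X)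
              ≤ 2 / ((ℓ : ℝ) - 3) ^ 2))) := by
  classical
  have hq1 : 1 ≤ Fintype.card G := Fintype.card_pos
  have hq : (0:ℝ) < (Fintype.card G : ℝ) := by exact_mod_cast hq1
  have hCn : 1 ≤ r.choose k := Nat.choose_pos hkr
  have hC : (0:ℝ) < (r.choose k : ℝ) := by exact_mod_cast hCn
  have hr1 : 1 ≤ r := le_trans hk hkr
  have hRpos : (0:ℝ) < (r.choose k : ℝ) * (Fintype.card G : ℝ) ^ (r-1) := by positivity
  have hqr : (Fintype.card G : ℝ) ^ r = (Fintype.card G : ℝ) ^ (r-1) * Fintype.card G := by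
    rw [← pow_succ]
    congr 1
    omega
  have hqrpos : (0:ℝ) < (Fintype.card G : ℝ) ^ r := by positivity
  set p := D1probGt G k r (ℓ : ℝ) with hpdef
  have hpnn : 0 ≤ p := Finset.sum_nonneg fun X _ => D1pmf_nonneg X
  have hsum1 : ∑ X : Fin r → G, D1pmf k X = 1 := sum_D1pmf hk hkr
  have hple1 : p ≤ 1 := by
    rw [hpdef, D1probGt, ← hsum1]
    exact Finset.sum_le_sum_of_subset_of_nonneg (Finset.filter_subset _ _)
      (fun X _ _ => D1pmf_nonneg X)
  set A := (univ : Finset (Fin r → G)).filter (fun X => (numSol k X : ℝ) ≤ (ℓ:ℝ)) with hAdef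
  set B := (univ : Finset (Fin r → G)).filter
    (fun X => ¬((numSol k X : ℝ) ≤ (ℓ:ℝ))) with hBdef
  have hABcard : A.card + B.card = Fintype.card G ^ r := by
    rw [hAdef, hBdef, Finset.card_filter_add_card_filter_not, Finset.card_univ,
      Fintype.card_fun, Fintype.card_fin]
  have hpB : ∑ X ∈ B, D1pmf k X = p := by
    rw [hpdef, D1probGt, hBdef]
    refine Finset.sum_congr ?_ (fun _ _ => rfl)
    ext X
    simp [not_le]
  -- pointwise absolute difference
  have habs : ∀ X : Fin r → G, |Dhybpmf G k r (ℓ:ℝ) X - D1pmf k X|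
      = if (numSol k X : ℝ) ≤ (ℓ:ℝ) then p * (1/(Fintype.card G : ℝ)^r)
        else D1pmf k X - p * (1/(Fintype.card G : ℝ)^r) := by
    intro X
    by_cases hcase : (numSol k X : ℝ) ≤ (ℓ:ℝ)
    · rw [if_pos hcase, Dhybpmf, D0pmf, if_pos hcase]
      have h0 : D1pmf k X + p * (1/(Fintype.card G : ℝ)^r) - D1pmf k X
          = p * (1/(Fintype.card G : ℝ)^r) := by ring
      rw [h0, abs_of_nonneg (by positivity)]
    · rw [if_neg hcase, Dhybpmf, D0pmf, if_neg hcase]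
      have hle : p * (1/(Fintype.card G : ℝ)^r) ≤ D1pmf k X := by
        have h1 : p * (1/(Fintype.card G : ℝ)^r) ≤ 1/(Fintype.card G : ℝ)^r :=
          mul_le_of_le_one_left (by positivity) hple1
        have h2 : (1:ℝ)/(Fintype.card G : ℝ)^r
            ≤ 1/((r.choose k : ℝ) * (Fintype.card G : ℝ)^(r-1)) := by
          apply one_div_le_one_div_of_le hRpos
          rw [hqr]
          have hGq : (r.choose k : ℝ) ≤ (Fintype.card G : ℝ) := by exact_mod_cast hG
          have := mul_le_mul_of_nonneg_right hGq
            (le_of_lt (show (0:ℝ) < (Fintype.card G : ℝ)^(r-1) by positivity))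
          linarith [this]
        have hl1 : (1:ℝ) ≤ (ℓ:ℝ) := by exact_mod_cast hℓ
        have hc1 : (1:ℝ) ≤ (numSol k X : ℝ) := by
          have := not_le.1 hcase
          linarith
        have h3 : (1:ℝ)/((r.choose k : ℝ) * (Fintype.card G : ℝ)^(r-1))
            ≤ (numSol k X : ℝ)/((r.choose k : ℝ) * (Fintype.card G : ℝ)^(r-1)) :=
          (div_le_div_iff_of_pos_right hRpos).2 hc1
        rw [D1pmf_eq hk hkr]
        linarith
      have h0 : 0 + p * (1/(Fintype.card G : ℝ)^r) - D1pmf k X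
          = -(D1pmf k X - p * (1/(Fintype.card G : ℝ)^r)) := by ring
      rw [h0, abs_neg, abs_of_nonneg (by linarith)]
  -- the exact SD identity
  have hSD : SD (Dhybpmf G k r (ℓ:ℝ)) (fun X : Fin r → G => D1pmf k X)
      = p * ((A.card : ℝ) / (Fintype.card G : ℝ)^r) := by
    rw [SD]
    simp only [habs]
    rw [Finset.sum_ite, Finset.sum_const, Finset.sum_sub_distrib, Finset.sum_const]
    rw [← hAdef, ← hBdef, hpB]
    have hBr : (B.card : ℝ) = (Fintype.card G : ℝ)^r - A.card := by
      have := hABcard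
      have hcast : (A.card : ℝ) + B.card = (Fintype.card G : ℝ)^r := by
        exact_mod_cast congrArg (Nat.cast : ℕ → ℝ) this
      linarith
    rw [nsmul_eq_mul, nsmul_eq_mul, hBr]
    field_simp
    ring
  have hAeq : ((univ : Finset (Fin r → G)).filter (fun X => numSol k X ≤ ℓ)) = A := by
    rw [hAdef]
    ext X
    simp [Nat.cast_le]
  refine ⟨by rw [hSD, hAeq], ?_⟩
  intro h3 h4
  -- Part 2a : SD ≤ p
  have hAle : (A.card : ℝ) / (Fintype.card G : ℝ)^r ≤ 1 := by
    rw [div_le_one hqrpos]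
    have h := Finset.card_le_univ A
    rw [Fintype.card_fun, Fintype.card_fin] at h
    exact_mod_cast h
  have part2a : SD (Dhybpmf G k r (ℓ:ℝ)) (fun X : Fin r → G => D1pmf k X) ≤ p := by
    rw [hSD]
    calc p * ((A.card : ℝ) / (Fintype.card G : ℝ)^r) ≤ p * 1 :=
        mul_le_mul_of_nonneg_left hAle hpnn
      _ = p := mul_one p
  -- Part 2b : Chebyshev
  have hE3 : expD1 G k r ≤ 3 := le_trans (expD1_le hk hkr) h3
  have hℓ4 : (4:ℝ) ≤ (ℓ:ℝ) := by exact_mod_cast h4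
  have hd3pos : (0:ℝ) < ((ℓ:ℝ) - 3)^2 := by
    have : (0:ℝ) < (ℓ:ℝ) - 3 := by linarith
    positivity
  have hcheb : p * ((ℓ:ℝ) - 3)^2 ≤ varD1 G k r := by
    rw [hpdef, D1probGt, Finset.sum_mul]
    have step1 : ∑ X ∈ (univ : Finset (Fin r → G)).filter (fun X => (ℓ:ℝ) < numSol k X),
        D1pmf k X * ((ℓ:ℝ) - 3)^2
        ≤ ∑ X ∈ (univ : Finset (Fin r → G)).filter (fun X => (ℓ:ℝ) < numSol k X),
          D1pmf k X * ((numSol k X : ℝ) - expD1 G k r)^2 := by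
      refine Finset.sum_le_sum fun X hX => ?_
      have hXl : (ℓ:ℝ) < numSol k X := (Finset.mem_filter.1 hX).2
      have hXl' : (ℓ:ℝ) + 1 ≤ numSol k X := by
        have : ℓ < numSol k X := by exact_mod_cast hXl
        exact_mod_cast this
      refine mul_le_mul_of_nonneg_left ?_ (D1pmf_nonneg X)
      apply pow_le_pow_left₀ (by linarith)
      linarith
    refine le_trans step1 ?_
    rw [varD1]
    refine Finset.sum_le_sum_of_subset_of_nonneg (Finset.filter_subset _ _) fun X _ _ =>
      mul_nonneg (D1pmf_nonneg X) (sq_nonneg _)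
  have part2b : p ≤ varD1 G k r / ((ℓ:ℝ) - 3)^2 := by
    rw [le_div_iff₀ hd3pos]
    exact hcheb
  refine ⟨part2a, part2b, ?_⟩
  -- Part 2c
  intro hk3 h2k hrbig hqbig
  have hr6 : 6 ≤ r := by omega
  have hE : expD1 G k r = 1 + ((r.choose k : ℝ) - 1) / (Fintype.card G : ℝ) :=
    expD1_eq_of hk hkr (by omega)
  have hkfac : (0:ℝ) < (k.factorial : ℝ) := by exact_mod_cast k.factorial_pos
  have hfactC : (k.factorial : ℝ) * (r.choose k : ℝ) ≤ (Fintype.card G : ℝ) := by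
    exact_mod_cast le_trans (fact_mul_choose_le hkr) hqbig
  have hC1 : (1:ℝ) ≤ (r.choose k : ℝ) := by exact_mod_cast hCn
  set e := ((r.choose k : ℝ) - 1) / (Fintype.card G : ℝ) with hedef
  have he_nn : 0 ≤ e := div_nonneg (by linarith) hq.le
  have heub : e ≤ 1/(k.factorial : ℝ) := by
    rw [hedef, div_le_div_iff₀ hq hkfac]
    nlinarith
  have hCq1 : (r.choose k : ℝ) ≤ (Fintype.card G : ℝ) := by exact_mod_cast hG
  have hnum : (2:ℝ)^k + 2 ≤ 2*(k.factorial : ℝ) := by exact_mod_cast two_pow_add_two_le hk3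
  -- third-moment bound, real form
  have hq2 : (Fintype.card G : ℝ)^(r-2) = (Fintype.card G : ℝ)^(r-3) * Fintype.card G := by
    rw [← pow_succ]; congr 1; omega
  have hq1' : (Fintype.card G : ℝ)^(r-1) = (Fintype.card G : ℝ)^(r-3) * (Fintype.card G:ℝ)^2 := by
    rw [← pow_add]; congr 1; omega
  have hM : (∑ X : Fin r → G, ((numSol k X : ℝ))^3)
      ≤ (r.choose k : ℝ) * ((Fintype.card G : ℝ)^(r-1)
          + ((r.choose k : ℝ)-1)*(Fintype.card G : ℝ)^(r-2)
          + ((r.choose k : ℝ)-1)*(((2:ℝ)^k+2)*(Fintype.card G : ℝ)^(r-2)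
              + (r.choose k : ℝ)*(Fintype.card G : ℝ)^(r-3))) := by
    have h := sum3 (G := G) (r := r) hk
    have hcast : (∑ X : Fin r → G, ((numSol k X : ℝ))^3)
        = ((∑ X : Fin r → G, (numSol k X)^3 : ℕ) : ℝ) := by push_cast; rfl
    rw [hcast]
    calc ((∑ X : Fin r → G, (numSol k X)^3 : ℕ) : ℝ)
        ≤ ((r.choose k * (Fintype.card G ^ (r - 1)
            + (r.choose k - 1) * Fintype.card G ^ (r - 2)
            + (r.choose k - 1) * ((2 ^ k + 2) * Fintype.card G ^ (r - 2)
                + r.choose k * Fintype.card G ^ (r - 3))) : ℕ) : ℝ) := by exact_mod_cast h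
      _ = _ := by push_cast [Nat.cast_sub hCn]; ring
  have hvar2 : varD1 G k r ≤ 2 := by
    rw [varD1_eq hk hkr, hE]
    have hdiv : (∑ X : Fin r → G, ((numSol k X : ℝ))^3)
        / ((r.choose k : ℝ) * (Fintype.card G : ℝ)^(r-1))
        ≤ 1 + e + ((2:ℝ)^k+2)*e + e * ((r.choose k : ℝ)/(Fintype.card G : ℝ)) := by
      rw [div_le_iff₀ hRpos]
      refine le_trans hM (le_of_eq ?_)
      rw [hedef, hq2, hq1']
      field_simp
      ring
    have hlast : e * ((r.choose k : ℝ)/(Fintype.card G : ℝ)) ≤ e := by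
      have : (r.choose k : ℝ)/(Fintype.card G : ℝ) ≤ 1 := by
        rw [div_le_one hq]; exact hCq1
      nlinarith
    have hmain2 : ((2:ℝ)^k+2)*e ≤ 2 := by
      calc ((2:ℝ)^k+2)*e ≤ (2*(k.factorial : ℝ))*(1/(k.factorial : ℝ)) := by
            apply mul_le_mul hnum heub he_nn (by positivity)
        _ = 2 := by field_simp
    have hfin : (∑ X : Fin r → G, ((numSol k X : ℝ))^3)
        / ((r.choose k : ℝ) * (Fintype.card G : ℝ)^(r-1)) - (1 + e)^2 ≤ 2 := by
      nlinarith [sq_nonneg e]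
    exact hfin
  have : varD1 G k r / ((ℓ:ℝ)-3)^2 ≤ 2 / ((ℓ:ℝ)-3)^2 :=
    (div_le_div_iff_of_pos_right hd3pos).2 hvar2
  exact le_trans part2a (le_trans part2b this)
end

section
/- Let G be a finite abelian group, let k, r be integers with 2 ≤ k, 2k ≤ r, and r ≥ 2^k·k², and let Δ ∈ (0,1] be a real number such that |G| ≥ r^{k/Δ}/2 and r^{k(1−1/Δ)} ≤ 1/4. Then the probability that a planted instance has a k-SUM solution other than the planted one satisfies Pr_{X∼D1}[c(X) ≥ 2] < 4·r^{k(1−1/Δ)}. -/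
open Finset

variable {G : Type} [AddCommGroup G] [Fintype G] [DecidableEq G] {r : ℕ}

lemma my_sum_update (s : Finset (Fin r)) (j0 : Fin r) (h : j0 ∉ s) (Y : Fin r → G) (x : G) :
    ∑ i ∈ s, Function.update Y j0 x i = ∑ i ∈ s, Y i := by
  refine Finset.sum_congr rfl fun i hi => Function.update_of_ne (fun he => ?_) _ _
  exact h (he ▸ hi)

lemma my_card_graph (j0 : Fin r) (φ : (Fin r → G) → G)
    (hφ : ∀ Y x, φ (Function.update Y j0 x) = φ Y) :
    ((univ : Finset (Fin r → G)).filter (fun Y => Y j0 = φ Y)).card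
      = Fintype.card G ^ (r - 1) := by
  classical
  have hcard : (univ : Finset ({i : Fin r // i ≠ j0} → G)).card = Fintype.card G ^ (r - 1) := by
    rw [Finset.card_univ, Fintype.card_fun]
    congr 1
    have : Fintype.card {i : Fin r // i ≠ j0} = Fintype.card (Fin r) - 1 := by
      rw [Fintype.card_subtype_compl, Fintype.card_subtype_eq]
    simpa using this
  rw [← hcard]
  apply Finset.card_bij' (i := fun Y _ => fun i : {i : Fin r // i ≠ j0} => Y i.1)
    (j := fun g _ => Function.update (fun i => if h : i = j0 then 0 else g ⟨i, h⟩) j0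
      (φ (fun i => if h : i = j0 then 0 else g ⟨i, h⟩)))
  · intro Y hY
    exact mem_univ _
  · intro g hg
    simp only [mem_filter, mem_univ, true_and]
    rw [Function.update_self, hφ]
  · intro Y hY
    simp only [mem_filter, mem_univ, true_and] at hY
    have this1 : (fun i => if h : i = j0 then (0:G) else (fun i : {i : Fin r // i ≠ j0} => Y i.1) ⟨i, h⟩)
        = Function.update Y j0 0 := by
      funext i; by_cases h : i = j0 <;> simp [h, Function.update]
    rw [this1, hφ, ← hY]
    funext i; by_cases h : i = j0 <;> simp [h, Function.update]
  · intro g hg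
    funext i
    simp [Function.update, i.2]

lemma my_card_sumT (S T : Finset (Fin r)) (hS : S.Nonempty) (hcard : T.card = S.card)
    (hne : T ≠ S) :
    ((univ : Finset (Fin r → G)).filter (fun Y => ∑ j ∈ T, plant Y S j = 0)).card
      = Fintype.card G ^ (r - 1) := by
  classical
  obtain ⟨j0, hj0T, hj0S⟩ : ∃ j0, j0 ∈ T ∧ j0 ∉ S := by
    by_contra h
    push_neg at h
    exact hne (Finset.eq_of_subset_of_card_le (fun x hx => h x hx) hcard.ge)
  set i := S.min' hS with hi_def
  have hiS : i ∈ S := S.min'_mem hS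
  have hj0i : j0 ≠ i := fun h => hj0S (h ▸ hiS)
  have hplant_ne : ∀ (Y : Fin r → G) (j : Fin r), j ≠ i → plant Y S j = Y j := by
    intro Y j hj
    simp [plant, dif_pos hS, ← hi_def, hj]
  have hplant_i : ∀ (Y : Fin r → G), plant Y S i = -∑ x ∈ S.erase i, Y x := by
    intro Y
    simp [plant, dif_pos hS, ← hi_def]
  by_cases hiT : i ∈ T
  · set φ : (Fin r → G) → G :=
      fun Y => ∑ x ∈ S.erase i, Y x - ∑ x ∈ (T.erase i).erase j0, Y x with hφdef
    have hid : ∀ Y : Fin r → G, ∑ j ∈ T, plant Y S j = Y j0 - φ Y := by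
      intro Y
      have h1 : ∑ j ∈ T, plant Y S j = plant Y S i + ∑ j ∈ T.erase i, plant Y S j :=
        (Finset.add_sum_erase T _ hiT).symm
      have h2 : ∑ j ∈ T.erase i, plant Y S j = ∑ j ∈ T.erase i, Y j :=
        Finset.sum_congr rfl fun j hj => hplant_ne Y j (Finset.ne_of_mem_erase hj)
      have h3 : ∑ j ∈ T.erase i, Y j = Y j0 + ∑ j ∈ (T.erase i).erase j0, Y j :=
        (Finset.add_sum_erase _ _ (Finset.mem_erase.mpr ⟨hj0i, hj0T⟩)).symm
      rw [h1, h2, h3, hplant_i, hφdef]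
      exact (fun a b c : G => by abel : ∀ a b c : G, -a + (b + c) = b - (a - c)) _ _ _
    have hfe : ((univ : Finset (Fin r → G)).filter (fun Y => ∑ j ∈ T, plant Y S j = 0))
        = (univ.filter (fun Y => Y j0 = φ Y)) := by
      apply Finset.filter_congr
      intro Y _
      rw [hid Y, sub_eq_zero]
    rw [hfe]
    apply my_card_graph
    intro Y x
    rw [hφdef]
    simp only
    rw [my_sum_update _ _ (fun h => hj0S (Finset.mem_of_mem_erase h)) Y x,
      my_sum_update _ _ (Finset.notMem_erase j0 _) Y x]
  · set φ : (Fin r → G) → G := fun Y => -∑ x ∈ T.erase j0, Y x with hφdef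
    have hid : ∀ Y : Fin r → G, ∑ j ∈ T, plant Y S j = Y j0 - φ Y := by
      intro Y
      have h2 : ∑ j ∈ T, plant Y S j = ∑ j ∈ T, Y j :=
        Finset.sum_congr rfl fun j hj => hplant_ne Y j (fun h => hiT (h ▸ hj))
      have h3 : ∑ j ∈ T, Y j = Y j0 + ∑ j ∈ T.erase j0, Y j :=
        (Finset.add_sum_erase _ _ hj0T).symm
      rw [h2, h3, hφdef]
      exact (fun b c : G => by abel : ∀ b c : G, b + c = b - (-c)) _ _
    have hfe : ((univ : Finset (Fin r → G)).filter (fun Y => ∑ j ∈ T, plant Y S j = 0))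
        = (univ.filter (fun Y => Y j0 = φ Y)) := by
      apply Finset.filter_congr
      intro Y _
      rw [hid Y, sub_eq_zero]
    rw [hfe]
    apply my_card_graph
    intro Y x
    rw [hφdef]
    simp only [neg_inj]
    rw [my_sum_update _ _ (Finset.notMem_erase j0 _) Y x]

lemma my_card_badY (k : ℕ) (hk2 : 2 ≤ k) (S : Finset (Fin r)) (hSc : S.card = k) :
    ((univ : Finset (Fin r → G)).filter (fun Y => 2 ≤ numSol k (plant Y S))).card
      ≤ (r.choose k - 1) * Fintype.card G ^ (r - 1) := by
  classical
  have hS : S.Nonempty := Finset.card_pos.mp (by omega)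
  have hsub : (univ.filter (fun Y : Fin r → G => 2 ≤ numSol k (plant Y S))) ⊆
      (((univ : Finset (Fin r)).powersetCard k).erase S).biUnion
        (fun T => univ.filter (fun Y => ∑ j ∈ T, plant Y S j = 0)) := by
    intro Y hY
    simp only [mem_filter, mem_univ, true_and] at hY
    obtain ⟨T, hT, hTne⟩ : ∃ T ∈ ((univ : Finset (Fin r)).powersetCard k).filter
        (fun T => ∑ j ∈ T, plant Y S j = 0), T ≠ S := by
      by_contra h
      push_neg at h
      have hsub2 : ((univ : Finset (Fin r)).powersetCard k).filter
          (fun T => ∑ j ∈ T, plant Y S j = 0) ⊆ {S} :=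
        fun T hT => Finset.mem_singleton.mpr (h T hT)
      have := Finset.card_le_card hsub2
      simp only [Finset.card_singleton] at this
      rw [numSol] at hY
      omega
    rw [Finset.mem_filter] at hT
    apply Finset.mem_biUnion.mpr
    exact ⟨T, Finset.mem_erase.mpr ⟨hTne, hT.1⟩, Finset.mem_filter.mpr ⟨mem_univ _, hT.2⟩⟩
  calc (univ.filter (fun Y : Fin r → G => 2 ≤ numSol k (plant Y S))).card
      ≤ ((((univ : Finset (Fin r)).powersetCard k).erase S).biUnion
          (fun T => univ.filter (fun Y => ∑ j ∈ T, plant Y S j = 0))).card :=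
        Finset.card_le_card hsub
    _ ≤ ∑ T ∈ ((univ : Finset (Fin r)).powersetCard k).erase S,
          (univ.filter (fun Y : Fin r → G => ∑ j ∈ T, plant Y S j = 0)).card :=
        Finset.card_biUnion_le
    _ ≤ ∑ _T ∈ ((univ : Finset (Fin r)).powersetCard k).erase S,
          Fintype.card G ^ (r - 1) := by
        apply Finset.sum_le_sum
        intro T hT
        rw [Finset.mem_erase] at hT
        have hTc : T.card = k := (Finset.mem_powersetCard_univ.mp hT.2)
        rw [my_card_sumT S T hS (by rw [hTc, hSc]) hT.1]
    _ = (((univ : Finset (Fin r)).powersetCard k).erase S).card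
          * Fintype.card G ^ (r - 1) := by
        rw [Finset.sum_const, smul_eq_mul]
    _ = (r.choose k - 1) * Fintype.card G ^ (r - 1) := by
        rw [Finset.card_erase_of_mem (Finset.mem_powersetCard_univ.mpr hSc),
          Finset.card_powersetCard, Finset.card_univ, Fintype.card_fin]


/-- **Planted instances rarely have extraneous solutions.**
If `2 ≤ k`, `2k ≤ r`, `r ≥ 2^k·k²`, `Δ ∈ (0,1]`, `|G| ≥ r^{k/Δ}/2`, and
`r^{k(1−1/Δ)} ≤ 1/4`, then `Pr_{X∼D1}[c(X) ≥ 2] < 4·r^{k(1−1/Δ)}`. -/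
theorem planted_extra_solutions_rare
    (G : Type) [AddCommGroup G] [Fintype G] [DecidableEq G]
    (k r : ℕ) (hk : 2 ≤ k) (hkr : 2 * k ≤ r) (hr : 2 ^ k * k ^ 2 ≤ r)
    (Δ : ℝ) (hΔ0 : 0 < Δ) (hΔ1 : Δ ≤ 1)
    (hG : (r : ℝ) ^ ((k : ℝ) / Δ) / 2 ≤ (Fintype.card G : ℝ))
    (hsmall : (r : ℝ) ^ ((k : ℝ) * (1 - 1 / Δ)) ≤ 1 / 4) :
    ∑ X ∈ (univ : Finset (Fin r → G)).filter (fun X => 2 ≤ numSol k X), D1pmf k X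
      < 4 * (r : ℝ) ^ ((k : ℝ) * (1 - 1 / Δ)) := by
  classical
  set N := Fintype.card G with hN
  set m := r.choose k with hm
  set A := (univ : Finset (Fin r → G)).filter (fun X => 2 ≤ numSol k X) with hA
  set P := (univ : Finset ((Fin r → G) × Finset (Fin r))).filter
      (fun p => p.2.card = k ∧ 2 ≤ numSol k (plant p.1 p.2)) with hP
  have hkler : k ≤ r := by omega
  have hr16 : 16 ≤ r := by
    have h1 : 2 ^ 2 ≤ 2 ^ k := Nat.pow_le_pow_right (by norm_num) hk
    have h2 : 2 ^ 2 ≤ k ^ 2 := Nat.pow_le_pow_left hk 2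
    calc 16 = 2 ^ 2 * 2 ^ 2 := by norm_num
      _ ≤ 2 ^ k * k ^ 2 := Nat.mul_le_mul h1 h2
      _ ≤ r := hr
  have hrpos : (0 : ℝ) < r := by positivity
  have hNpos0 : 0 < N := Fintype.card_pos
  have hNpos : (0 : ℝ) < N := by exact_mod_cast hNpos0
  have hmpos0 : 0 < m := Nat.choose_pos hkler
  have hmpos : (0 : ℝ) < m := by exact_mod_cast hmpos0
  -- Step 1: the sum equals P.card / (N^r * m)
  have hstep1 : ∑ X ∈ A, D1pmf k X = (P.card : ℝ) / ((N : ℝ) ^ r * (m : ℝ)) := by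
    have hfib : P.card = ∑ X ∈ A,
        (((univ : Finset ((Fin r → G) × Finset (Fin r))).filter
          (fun p => p.2.card = k ∧ plant p.1 p.2 = X)).card) := by
      rw [Finset.card_eq_sum_card_fiberwise
        (f := fun p : (Fin r → G) × Finset (Fin r) => plant p.1 p.2) (t := A)
        (fun p hp => by
          simp only [Finset.mem_coe, hP, Finset.mem_filter] at hp
          exact Finset.mem_filter.mpr ⟨mem_univ _, hp.2.2⟩)]
      apply Finset.sum_congr rfl
      intro X hX
      congr 1
      rw [hA, Finset.mem_filter] at hX
      ext p
      rw [hP]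
      simp only [Finset.mem_filter, Finset.mem_univ, true_and]
      constructor
      · rintro ⟨⟨h1, _⟩, h3⟩; exact ⟨h1, h3⟩
      · rintro ⟨h1, h3⟩; exact ⟨⟨h1, h3 ▸ hX.2⟩, h3⟩
    simp only [D1pmf]
    rw [← Finset.sum_div]
    congr 1
    rw [hfib]
    push_cast
    rfl
  -- Step 2: P.card ≤ m * ((m - 1) * N ^ (r - 1))
  have hstep2 : P.card ≤ m * ((m - 1) * N ^ (r - 1)) := by
    rw [Finset.card_eq_sum_card_fiberwise
      (f := Prod.snd) (t := (univ : Finset (Fin r)).powersetCard k)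
      (fun p hp => by
        simp only [Finset.mem_coe, hP, Finset.mem_filter] at hp
        exact Finset.mem_powersetCard_univ.mpr hp.2.1)]
    calc ∑ S ∈ (univ : Finset (Fin r)).powersetCard k,
          (P.filter (fun p => p.2 = S)).card
        ≤ ∑ S ∈ (univ : Finset (Fin r)).powersetCard k, (m - 1) * N ^ (r - 1) := by
          apply Finset.sum_le_sum
          intro S hS
          have hSc : S.card = k := Finset.mem_powersetCard_univ.mp hS
          have hle : (P.filter (fun p => p.2 = S)).card ≤
              ((univ : Finset (Fin r → G)).filter
                (fun Y => 2 ≤ numSol k (plant Y S))).card := by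
            apply Finset.card_le_card_of_injOn (fun p => p.1)
            · intro p hp
              rw [Finset.mem_coe, Finset.mem_filter, hP, Finset.mem_filter] at hp
              obtain ⟨⟨_, _, h2⟩, h3⟩ := hp
              rw [Finset.mem_coe, Finset.mem_filter]
              exact ⟨mem_univ _, by rw [← h3]; exact h2⟩
            · intro p hp q hq hpq
              rw [Finset.mem_coe, Finset.mem_filter] at hp hq
              exact Prod.ext hpq (hp.2.trans hq.2.symm)
          exact hle.trans (my_card_badY k hk S hSc)
      _ = m * ((m - 1) * N ^ (r - 1)) := by
          rw [Finset.sum_const, smul_eq_mul, Finset.card_powersetCard,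
            Finset.card_univ, Fintype.card_fin]
  -- Step 3: arithmetic
  have hub : ∑ X ∈ A, D1pmf k X ≤ ((m : ℝ) - 1) / (N : ℝ) := by
    rw [hstep1]
    have hD : (0 : ℝ) < (N : ℝ) ^ r * (m : ℝ) := by positivity
    have h1 : (P.card : ℝ) ≤ (m : ℝ) * (((m : ℝ) - 1) * (N : ℝ) ^ (r - 1)) := by
      have := hstep2
      have hc : ((m * ((m - 1) * N ^ (r - 1)) : ℕ) : ℝ)
          = (m : ℝ) * ((((m - 1 : ℕ)) : ℝ) * (N : ℝ) ^ (r - 1)) := by push_cast; ring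
      have hm1 : (((m - 1 : ℕ)) : ℝ) ≤ (m : ℝ) - 1 := by
        rw [Nat.cast_sub hmpos0]; norm_num
      calc (P.card : ℝ) ≤ ((m * ((m - 1) * N ^ (r - 1)) : ℕ) : ℝ) := by exact_mod_cast this
        _ = (m : ℝ) * ((((m - 1 : ℕ)) : ℝ) * (N : ℝ) ^ (r - 1)) := hc
        _ ≤ (m : ℝ) * (((m : ℝ) - 1) * (N : ℝ) ^ (r - 1)) := by
            apply mul_le_mul_of_nonneg_left _ (le_of_lt hmpos)
            apply mul_le_mul_of_nonneg_right hm1 (by positivity)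
    have hNr : (N : ℝ) ^ r = (N : ℝ) ^ (r - 1) * (N : ℝ) := by
      rw [← pow_succ]
      congr 1
      omega
    calc (P.card : ℝ) / ((N : ℝ) ^ r * (m : ℝ))
        ≤ ((m : ℝ) * (((m : ℝ) - 1) * (N : ℝ) ^ (r - 1))) / ((N : ℝ) ^ r * (m : ℝ)) := by
          exact div_le_div_of_nonneg_right h1 hD.le
      _ = ((m : ℝ) - 1) / (N : ℝ) := by
          rw [hNr]
          have h0 : (N : ℝ) ^ (r - 1) ≠ 0 := by positivity
          field_simp
  -- final arithmetic
  have hPw : (0:ℝ) < (r:ℝ) ^ ((k:ℝ) * (1 - 1/Δ)) := Real.rpow_pos_of_pos hrpos _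
  have hd2 : (0:ℝ) < (r:ℝ) ^ ((k:ℝ)/Δ) / 2 := by positivity
  have hmr : (m:ℝ) ≤ (r:ℝ) ^ ((k:ℝ)) := by
    rw [Real.rpow_natCast]
    exact_mod_cast Nat.choose_le_pow r k
  have h2 : (m:ℝ)/(N:ℝ) ≤ ((r:ℝ)^((k:ℝ))) / ((r:ℝ)^((k:ℝ)/Δ)/2) :=
    div_le_div₀ (by positivity) hmr hd2 hG
  have h3 : ((r:ℝ)^((k:ℝ))) / ((r:ℝ)^((k:ℝ)/Δ)/2) = 2 * (r:ℝ)^((k:ℝ)*(1-1/Δ)) := by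
    have hsub : (r:ℝ)^((k:ℝ)*(1-1/Δ)) = (r:ℝ)^((k:ℝ)) / (r:ℝ)^((k:ℝ)/Δ) := by
      rw [← Real.rpow_sub hrpos]
      congr 1
      field_simp
    rw [hsub]
    have hne : (r:ℝ)^((k:ℝ)/Δ) ≠ 0 := by positivity
    field_simp
  have hlt : ((m:ℝ) - 1)/(N:ℝ) < (m:ℝ)/(N:ℝ) :=
    (div_lt_div_iff_of_pos_right hNpos).mpr (by linarith)
  calc ∑ X ∈ A, D1pmf k X ≤ ((m:ℝ)-1)/(N:ℝ) := hub
    _ < (m:ℝ)/(N:ℝ) := hlt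
    _ ≤ 2 * (r:ℝ)^((k:ℝ)*(1-1/Δ)) := h3 ▸ h2
    _ < 4 * (r:ℝ)^((k:ℝ)*(1-1/Δ)) := by nlinarith [hPw]
end

section
/- Let k ≥ 1 and r ≥ 1 be integers, let M ≥ 1 be an integer, and let X_1, …, X_r be integers with |X_i| < M for every i. Define Y_i := (k+1)·M + X_i for each i, and t := k·(k+1)·M. Then for every subset S ⊆ {1,…,r}: Σ_{i∈S} Y_i = t if and only if |S| = k and Σ_{i∈S} X_i = 0. -/
open Finset

/-- **Worst-case reduction from k-SUM to subset sum (core combinatorial claim).**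
Let `k, r ≥ 1`, `M ≥ 1`, and let `X₁, …, X_r` be integers with `|X_i| < M`.
With `Y_i := (k+1)·M + X_i` and `t := k·(k+1)·M`, for every subset
`S ⊆ {1,…,r}`: `Σ_{i∈S} Y_i = t` iff `|S| = k` and `Σ_{i∈S} X_i = 0`. -/
theorem ksum_to_subset_sum
    (k r : ℕ) (M : ℤ) (hk : 1 ≤ k) (hr : 1 ≤ r) (hM : 1 ≤ M)
    (X : Fin r → ℤ) (hX : ∀ i, |X i| < M) (S : Finset (Fin r)) :
    (∑ i ∈ S, (((k : ℤ) + 1) * M + X i)) = (k : ℤ) * ((k : ℤ) + 1) * M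
      ↔ (S.card = k ∧ ∑ i ∈ S, X i = 0) := by
  have hsum : (∑ i ∈ S, (((k : ℤ) + 1) * M + X i))
      = (S.card : ℤ) * (((k : ℤ) + 1) * M) + ∑ i ∈ S, X i := by
    rw [Finset.sum_add_distrib, Finset.sum_const, nsmul_eq_mul]
  have hb : |∑ i ∈ S, X i| ≤ (S.card : ℤ) * (M - 1) := by
    calc |∑ i ∈ S, X i| ≤ ∑ i ∈ S, |X i| := Finset.abs_sum_le_sum_abs _ _
      _ ≤ ∑ _i ∈ S, (M - 1) := Finset.sum_le_sum (fun i _ => by have := hX i; omega)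
      _ = (S.card : ℤ) * (M - 1) := by rw [Finset.sum_const, nsmul_eq_mul]
  obtain ⟨hb1, hb2⟩ := abs_le.mp hb
  constructor
  · intro h
    rw [hsum] at h
    have hck : S.card = k := by
      by_contra hne
      rcases lt_or_gt_of_ne hne with hlt | hgt
      · have h1 : (S.card : ℤ) ≤ (k : ℤ) - 1 := by
          have : (S.card : ℤ) < (k : ℤ) := by exact_mod_cast hlt
          omega
        have h0 : (0 : ℤ) ≤ (S.card : ℤ) := Int.natCast_nonneg _
        nlinarith [mul_nonneg (by linarith : (0:ℤ) ≤ (k:ℤ) - 1 - (S.card:ℤ)) (by linarith : (0:ℤ) ≤ M - 1),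
          mul_nonneg (by linarith : (0:ℤ) ≤ (k:ℤ) - (S.card:ℤ) - 1) (by positivity : (0:ℤ) ≤ ((k:ℤ)+1)*M)]
      · have h1 : (k : ℤ) + 1 ≤ (S.card : ℤ) := by
          have : (k : ℤ) < (S.card : ℤ) := by exact_mod_cast hgt
          omega
        nlinarith [mul_nonneg (mul_nonneg (by positivity : (0:ℤ) ≤ (k:ℤ)) (by linarith : (0:ℤ) ≤ (S.card:ℤ) - (k:ℤ) - 1)) (by linarith : (0:ℤ) ≤ M),
          mul_nonneg (by positivity : (0:ℤ) ≤ (S.card:ℤ)) (by linarith : (0:ℤ) ≤ M - 1)]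
    refine ⟨hck, ?_⟩
    rw [hck] at h
    linarith
  · rintro ⟨hc, hs⟩
    rw [hsum, hc, hs]
    ring
end

section
/- Let k, r be integers with k ≥ 3 and r ≥ 10k. Let U be the uniform distribution on all subsets of {1,…,r}, and let D be the distribution on subsets of {1,…,r} obtained by sampling a uniformly random k-element subset T ⊆ {1,…,r} and an independent uniformly random subset S ⊆ {1,…,r}, conditioning on S ∩ T = ∅, and outputting S ∪ T. Then for every event E (a family of subsets of {1,…,r}) with U(E) = γ₀ and exp(−r/8) ≤ γ₀/2, it holds that D(E) ≥ γ₀ · 2^{−(2k+1)}. -/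
open Finset

/-- The pmf of the distribution `D` on subsets of `{1,…,r}` obtained by sampling a
uniformly random `k`-element subset `T` and an independent uniformly random subset
`S`, conditioning on `S ∩ T = ∅`, and outputting `S ∪ T`. (Here pairs `p = (T, S)`
with `|T| = k` and `S ∩ T = ∅` are counted uniformly.) -/
noncomputable def unionDistPmf (k r : ℕ) (Q : Finset (Fin r)) : ℝ :=
  (((univ : Finset (Finset (Fin r) × Finset (Fin r))).filter
      (fun p => p.1.card = k ∧ p.2 ∩ p.1 = ∅ ∧ p.2 ∪ p.1 = Q)).card : ℝ)
    / (((univ : Finset (Finset (Fin r) × Finset (Fin r))).filter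
      (fun p => p.1.card = k ∧ p.2 ∩ p.1 = ∅)).card : ℝ)

/-- Probability of an event `E` (a family of subsets of `{1,…,r}`) under the
distribution `D` above. -/
noncomputable def unionDistProb (k r : ℕ) (E : Finset (Finset (Fin r))) : ℝ :=
  (((univ : Finset (Finset (Fin r) × Finset (Fin r))).filter
      (fun p => p.1.card = k ∧ p.2 ∩ p.1 = ∅ ∧ p.2 ∪ p.1 ∈ E)).card : ℝ)
    / (((univ : Finset (Finset (Fin r) × Finset (Fin r))).filter
      (fun p => p.1.card = k ∧ p.2 ∩ p.1 = ∅)).card : ℝ)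

lemma fiber_card (k r : ℕ) (Q : Finset (Fin r)) :
    (((univ : Finset (Finset (Fin r) × Finset (Fin r))).filter
      (fun p => p.1.card = k ∧ p.2 ∩ p.1 = ∅ ∧ p.2 ∪ p.1 = Q)).card = Q.card.choose k) := by
  rw [← card_powersetCard k Q]
  apply Finset.card_bij' (fun p _ => p.1) (fun T _ => (T, Q \ T))
  · rintro ⟨T, S⟩ hp
    simp only [mem_filter, mem_univ, true_and] at hp
    obtain ⟨hc, hi, hu⟩ := hp
    simp only [mem_powersetCard]
    exact ⟨hu ▸ subset_union_right, hc⟩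
  · intro T hT
    simp only [mem_powersetCard] at hT
    simp only [mem_filter, mem_univ, true_and]
    refine ⟨hT.2, ?_, ?_⟩
    · rw [sdiff_inter_self]
    · rw [sdiff_union_self_eq_union, union_eq_left.mpr hT.1]
  · rintro ⟨T, S⟩ hp
    simp only [mem_filter, mem_univ, true_and] at hp
    obtain ⟨hc, hi, hu⟩ := hp
    have hdisj : Disjoint S T := disjoint_iff_inter_eq_empty.mpr hi
    simp only [Prod.mk.injEq, true_and]
    rw [← hu, union_sdiff_cancel_right hdisj]
  · intro T hT; rfl

lemma subs_compl (r : ℕ) (S T : Finset (Fin r)) : S ⊆ Tᶜ ↔ S ∩ T = ∅ := by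
  rw [← disjoint_iff_inter_eq_empty, ← Finset.le_iff_subset]
  exact le_compl_iff_disjoint_right

lemma denom_card (k r : ℕ) :
    (((univ : Finset (Finset (Fin r) × Finset (Fin r))).filter
      (fun p => p.1.card = k ∧ p.2 ∩ p.1 = ∅)).card = r.choose k * 2 ^ (r - k)) := by
  rw [Finset.card_eq_sum_card_fiberwise (f := Prod.fst)
    (t := univ.filter (fun T : Finset (Fin r) => T.card = k))
    (fun p hp => by simp only [mem_coe, mem_filter, mem_univ, true_and] at hp ⊢; exact hp.1)]
  have hfib : ∀ T ∈ univ.filter (fun T : Finset (Fin r) => T.card = k),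
      (((univ : Finset (Finset (Fin r) × Finset (Fin r))).filter
        (fun p => p.1.card = k ∧ p.2 ∩ p.1 = ∅)).filter (fun p => p.1 = T)).card
        = 2 ^ (r - k) := by
    intro T hT
    simp only [mem_filter, mem_univ, true_and] at hT
    rw [filter_filter]
    rw [show ((univ : Finset (Finset (Fin r) × Finset (Fin r))).filter
        (fun p => (p.1.card = k ∧ p.2 ∩ p.1 = ∅) ∧ p.1 = T))
      = ((univ : Finset (Finset (Fin r))).filter (· ⊆ Tᶜ)).image (fun S => (T, S)) by
        ext ⟨T', S⟩
        simp only [mem_filter, mem_univ, true_and, mem_image]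
        constructor
        · rintro ⟨⟨hc, hi⟩, rfl⟩
          exact ⟨_, (subs_compl r _ T').mpr hi, rfl⟩
        · rintro ⟨S', hS', h⟩
          injection h with h1 h2
          subst h1; subst h2
          exact ⟨⟨hT, (subs_compl r _ _).mp hS'⟩, rfl⟩]
    rw [Finset.card_image_of_injective _ (fun a b h => by simpa using h)]
    rw [show ((univ : Finset (Finset (Fin r))).filter (· ⊆ Tᶜ)) = Tᶜ.powerset by
        ext S; simp [mem_powerset],
      card_powerset, card_compl, hT]
    simp
  rw [Finset.sum_congr rfl hfib, Finset.sum_const,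
    show ((univ : Finset (Finset (Fin r))).filter (fun T => T.card = k)) = powersetCard k univ by
      ext S; simp [mem_powersetCard], card_powersetCard]
  simp [mul_comm]

lemma numer_card (k r : ℕ) (E : Finset (Finset (Fin r))) :
    (((univ : Finset (Finset (Fin r) × Finset (Fin r))).filter
      (fun p => p.1.card = k ∧ p.2 ∩ p.1 = ∅ ∧ p.2 ∪ p.1 ∈ E)).card
      = ∑ Q ∈ E, Q.card.choose k) := by
  rw [Finset.card_eq_sum_card_fiberwise (f := fun p => p.2 ∪ p.1) (t := E)
    (fun p hp => by simp only [mem_coe, mem_filter, mem_univ, true_and] at hp; exact hp.2.2)]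
  refine Finset.sum_congr rfl fun Q hQ => ?_
  rw [filter_filter, ← fiber_card k r Q]
  congr 1
  apply filter_congr
  intro p _
  constructor
  · rintro ⟨⟨h1, h2, _⟩, h4⟩; exact ⟨h1, h2, h4⟩
  · rintro ⟨h1, h2, h3⟩; exact ⟨⟨h1, h2, h3 ▸ hQ⟩, h3⟩

lemma small_card (r m : ℕ) :
    ((univ : Finset (Finset (Fin r))).filter (fun Q => Q.card < m)).card
      = ∑ j ∈ Finset.range m, r.choose j := by
  rw [Finset.card_eq_sum_card_fiberwise (f := fun Q => Q.card) (t := Finset.range m)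
    (fun Q hQ => by simpa using (mem_filter.mp hQ).2)]
  refine Finset.sum_congr rfl fun j hj => ?_
  rw [filter_filter]
  rw [show ((univ : Finset (Finset (Fin r))).filter (fun Q => Q.card < m ∧ Q.card = j))
      = powersetCard j univ by
    ext S
    simp only [mem_filter, mem_univ, true_and, mem_powersetCard, subset_univ]
    constructor
    · exact fun h => h.2
    · exact fun h => ⟨h ▸ Finset.mem_range.mp hj, h⟩]
  rw [card_powersetCard]; simp

lemma pow_est (r m : ℕ) (h25 : 25 * m ≤ 6 * r) (hm : 1 ≤ m) :
    4 ^ (m - 1) * 5 ^ r ≤ 7 ^ r := by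
  refine (Nat.pow_le_pow_iff_left (n := 25) (by norm_num)).mp ?_
  refine Nat.le_of_mul_le_mul_left ?_ (show 0 < 4 ^ 25 by positivity)
  calc 4 ^ 25 * (4 ^ (m - 1) * 5 ^ r) ^ 25
      = 4 ^ (25 * m) * 5 ^ (25 * r) := by
        rw [mul_pow, ← pow_mul, ← pow_mul, ← mul_assoc, ← pow_add]
        congr 2 <;> omega
    _ ≤ 4 ^ (6 * r) * 5 ^ (25 * r) :=
        Nat.mul_le_mul_right _ (Nat.pow_le_pow_right (by norm_num) h25)
    _ = (4 ^ 6 * 5 ^ 25) ^ r := by rw [mul_pow, ← pow_mul, ← pow_mul, Nat.mul_comm 6 r,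
        Nat.mul_comm 25 r]
    _ ≤ (7 ^ 25) ^ r := Nat.pow_le_pow_left (by norm_num) r
    _ = (7 ^ r) ^ 25 := by rw [← pow_mul, ← pow_mul, Nat.mul_comm]
    _ ≤ 4 ^ 25 * (7 ^ r) ^ 25 := Nat.le_mul_of_pos_left _ (by positivity)

lemma small_bound (r m : ℕ) (h25 : 25 * m ≤ 6 * r) (hm1 : 1 ≤ m) (hmr : m ≤ r) :
    (∑ j ∈ range m, (r.choose j : ℝ)) ≤ 2 ^ r * Real.exp (-(r : ℝ) / 8) := by
  have step1 : (∑ j ∈ range m, (r.choose j : ℝ))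
      ≤ 4 ^ (m - 1) * ∑ j ∈ range m, (r.choose j : ℝ) * (1 / 4) ^ j := by
    rw [Finset.mul_sum]
    refine Finset.sum_le_sum fun j hj => ?_
    have hjm := Finset.mem_range.mp hj
    have hone : (1 : ℝ) ≤ 4 ^ (m - 1) * (1 / 4) ^ j := by
      have : (4 : ℝ) ^ (m - 1) * (1 / 4) ^ j = 4 ^ (m - 1 - j) := by
        rw [show m - 1 = (m - 1 - j) + j by omega, pow_add, mul_assoc, ← mul_pow]
        norm_num
      rw [this]
      exact one_le_pow₀ (by norm_num)
    have hc : (0 : ℝ) ≤ (r.choose j : ℝ) := Nat.cast_nonneg _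
    nlinarith [mul_le_mul_of_nonneg_left hone hc]
  have step2 : (∑ j ∈ range m, (r.choose j : ℝ) * (1 / 4) ^ j) ≤ (5 / 4) ^ r := by
    have hsub : range m ⊆ range (r + 1) := Finset.range_subset_range.mpr (by omega)
    have hext : (∑ j ∈ range m, (r.choose j : ℝ) * (1 / 4) ^ j)
        ≤ ∑ j ∈ range (r + 1), (r.choose j : ℝ) * (1 / 4) ^ j :=
      Finset.sum_le_sum_of_subset_of_nonneg hsub (fun j _ _ => by positivity)
    refine hext.trans (le_of_eq ?_)
    have hb := add_pow (1 / 4 : ℝ) 1 r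
    rw [show (1 / 4 + 1 : ℝ) = 5 / 4 by norm_num] at hb
    rw [hb]
    exact Finset.sum_congr rfl fun j _ => by ring
  have step3 : (4 : ℝ) ^ (m - 1) * (5 / 4) ^ r ≤ 2 ^ r * Real.exp (-(r : ℝ) / 8) := by
    have hcast : ((4 : ℝ) ^ (m - 1) * 5 ^ r) ≤ 7 ^ r := by
      exact_mod_cast pow_est r m h25 hm1
    have h75 : (4 : ℝ) ^ (m - 1) * (5 / 4) ^ r ≤ (7 / 4) ^ r := by
      rw [div_pow, div_pow]
      rw [show (4 : ℝ) ^ (m - 1) * (5 ^ r / 4 ^ r) = (4 ^ (m - 1) * 5 ^ r) / 4 ^ r by ring]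
      gcongr
    refine h75.trans ?_
    have he : (7 / 8 : ℝ) ≤ Real.exp (-(1 / 8)) := by
      have := Real.add_one_le_exp (-(1 / 8) : ℝ); linarith
    calc ((7 : ℝ) / 4) ^ r = 2 ^ r * (7 / 8) ^ r := by rw [← mul_pow]; norm_num
      _ ≤ 2 ^ r * Real.exp (-(1 / 8)) ^ r := by gcongr <;> norm_num
      _ = 2 ^ r * Real.exp (-(r : ℝ) / 8) := by
          rw [← Real.exp_nat_mul]; congr 1; ring
  calc (∑ j ∈ range m, (r.choose j : ℝ))
      ≤ 4 ^ (m - 1) * ∑ j ∈ range m, (r.choose j : ℝ) * (1 / 4) ^ j := step1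
    _ ≤ 4 ^ (m - 1) * (5 / 4) ^ r := by
        refine mul_le_mul_of_nonneg_left step2 (by positivity)
    _ ≤ 2 ^ r * Real.exp (-(r : ℝ) / 8) := step3

lemma choose_est (k r m : ℕ) (hk : 3 ≤ k) (hr : 10 * k ≤ r) (hm : m = 6 * r / 25) :
    r.choose k ≤ 8 ^ k * m.choose k := by
  have h1 : r.descFactorial k ≤ 8 ^ k * m.descFactorial k := by
    rw [Nat.descFactorial_eq_prod_range, Nat.descFactorial_eq_prod_range]
    calc ∏ i ∈ range k, (r - i) ≤ ∏ i ∈ range k, 8 * (m - i) := by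
          refine Finset.prod_le_prod' fun i hi => ?_
          have hik := Finset.mem_range.mp hi
          omega
      _ = 8 ^ k * ∏ i ∈ range k, (m - i) := by
          rw [Finset.prod_mul_distrib, Finset.prod_const, card_range]
  refine Nat.le_of_mul_le_mul_left ?_ (Nat.factorial_pos k)
  calc k.factorial * r.choose k = r.descFactorial k :=
        (Nat.descFactorial_eq_factorial_mul_choose r k).symm
    _ ≤ 8 ^ k * m.descFactorial k := h1
    _ = 8 ^ k * (k.factorial * m.choose k) := by
        rw [Nat.descFactorial_eq_factorial_mul_choose]
    _ = k.factorial * (8 ^ k * m.choose k) := by ring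

/-- **Transfer from the uniform distribution on subsets to the union distribution.**
Let `k ≥ 3` and `r ≥ 10k`. For every event `E` (a family of subsets of `{1,…,r}`)
with uniform probability `γ₀ = |E|/2^r` satisfying `exp(−r/8) ≤ γ₀/2`, we have
`D(E) ≥ γ₀·2^{−(2k+1)}`. -/
theorem unionDist_transfer
    (k r : ℕ) (hk : 3 ≤ k) (hr : 10 * k ≤ r)
    (E : Finset (Finset (Fin r))) (γ₀ : ℝ)
    (hγ₀ : γ₀ = (E.card : ℝ) / (2 : ℝ) ^ r)
    (hlarge : Real.exp (-(r : ℝ) / 8) ≤ γ₀ / 2) :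
    γ₀ * (2 : ℝ) ^ (-(2 * (k : ℤ) + 1)) ≤ unionDistProb k r E := by
  set m := 6 * r / 25 with hm
  have hkr : k ≤ r := by omega
  have hkm : k ≤ m := by omega
  have hmr : m ≤ r := by omega
  have hm1 : 1 ≤ m := by omega
  have h25 : 25 * m ≤ 6 * r := by omega
  -- the small part of E is at most half of E
  have hEsplit : (E.filter (fun Q => Q.card < m)).card
      + (E.filter (fun Q => ¬ Q.card < m)).card = E.card := by
    have := Finset.card_filter_add_card_filter_not
      (s := E) (p := fun Q => Q.card < m)
    simpa using this
  have hsmall_le : ((E.filter (fun Q => Q.card < m)).card : ℝ) ≤ (E.card : ℝ) / 2 := by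
    have hsub : E.filter (fun Q => Q.card < m)
        ⊆ (univ : Finset (Finset (Fin r))).filter (fun Q => Q.card < m) := by
      intro Q hQ
      simp only [mem_filter, mem_univ, true_and] at hQ ⊢
      exact hQ.2
    have h1 : ((E.filter (fun Q => Q.card < m)).card : ℝ)
        ≤ (∑ j ∈ range m, (r.choose j : ℝ)) := by
      calc ((E.filter (fun Q => Q.card < m)).card : ℝ)
          ≤ (((univ : Finset (Finset (Fin r))).filter (fun Q => Q.card < m)).card : ℝ) := by
            exact_mod_cast Finset.card_le_card hsub
        _ = ∑ j ∈ range m, (r.choose j : ℝ) := by rw [small_card]; push_cast; ring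
    have h2 := small_bound r m h25 hm1 hmr
    have h3 : (2 : ℝ) ^ r * Real.exp (-(r : ℝ) / 8) ≤ (E.card : ℝ) / 2 := by
      have h2pos : (0 : ℝ) < 2 ^ r := by positivity
      calc (2 : ℝ) ^ r * Real.exp (-(r : ℝ) / 8) ≤ 2 ^ r * (γ₀ / 2) := by
            exact mul_le_mul_of_nonneg_left hlarge (le_of_lt h2pos)
        _ = (E.card : ℝ) / 2 := by rw [hγ₀]; field_simp
    linarith
  have hbig : ((E.card : ℝ)) / 2 ≤ ((E.filter (fun Q => ¬ Q.card < m)).card : ℝ) := by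
    have : ((E.filter (fun Q => Q.card < m)).card : ℝ)
        + ((E.filter (fun Q => ¬ Q.card < m)).card : ℝ) = (E.card : ℝ) := by
      exact_mod_cast hEsplit
    linarith
  -- numerator lower bound
  have hnum_nat : (E.filter (fun Q => ¬ Q.card < m)).card * m.choose k
      ≤ ∑ Q ∈ E, Q.card.choose k := by
    calc (E.filter (fun Q => ¬ Q.card < m)).card * m.choose k
        = ∑ Q ∈ E.filter (fun Q => ¬ Q.card < m), m.choose k := by
          rw [Finset.sum_const, smul_eq_mul]
      _ ≤ ∑ Q ∈ E.filter (fun Q => ¬ Q.card < m), Q.card.choose k := by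
          refine Finset.sum_le_sum fun Q hQ => ?_
          have := (mem_filter.mp hQ).2
          exact Nat.choose_le_choose k (by omega)
      _ ≤ ∑ Q ∈ E, Q.card.choose k :=
          Finset.sum_le_sum_of_subset (Finset.filter_subset _ _)
  -- denominators
  have hDpos : (0 : ℝ) < ((((univ : Finset (Finset (Fin r) × Finset (Fin r))).filter
      (fun p => p.1.card = k ∧ p.2 ∩ p.1 = ∅)).card : ℝ)) := by
    rw [denom_card]
    have : 0 < r.choose k := Nat.choose_pos hkr
    positivity
  rw [unionDistProb, le_div_iff₀ hDpos, denom_card, numer_card]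
  -- goal: γ₀ * 2^(-(2k+1)) * (C(r,k) * 2^(r-k)) ≤ ∑ Q ∈ E, C(|Q|,k)
  have hzpow : (2 : ℝ) ^ (-(2 * (k : ℤ) + 1)) = ((2 : ℝ) ^ (2 * k + 1))⁻¹ := by
    rw [show (-(2 * (k : ℤ) + 1)) = -((2 * k + 1 : ℕ) : ℤ) by push_cast; ring,
      zpow_neg, zpow_natCast]
  have hpow_split : ((2 : ℝ)) ^ (r - k) = 2 ^ r / 2 ^ k := by
    rw [eq_div_iff (by positivity), ← pow_add]
    congr 1
    omega
  have hchoose : ((r.choose k : ℝ)) ≤ 2 ^ (3 * k) * (m.choose k : ℝ) := by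
    have := choose_est k r m hk hr hm
    calc ((r.choose k : ℝ)) ≤ ((8 ^ k * m.choose k : ℕ) : ℝ) := by exact_mod_cast this
      _ = 2 ^ (3 * k) * (m.choose k : ℝ) := by
        push_cast
        rw [show ((8 : ℝ)) ^ k = 2 ^ (3 * k) by rw [pow_mul]; norm_num]
  have hnumR : ((E.card : ℝ)) / 2 * (m.choose k : ℝ)
      ≤ ((∑ Q ∈ E, Q.card.choose k : ℕ) : ℝ) := by
    calc ((E.card : ℝ)) / 2 * (m.choose k : ℝ)
        ≤ ((E.filter (fun Q => ¬ Q.card < m)).card : ℝ) * (m.choose k : ℝ) := by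
          exact mul_le_mul_of_nonneg_right hbig (Nat.cast_nonneg _)
      _ ≤ ((∑ Q ∈ E, Q.card.choose k : ℕ) : ℝ) := by exact_mod_cast hnum_nat
  rw [hγ₀, hzpow]
  push_cast
  rw [hpow_split]
  have h2r : (0:ℝ) < 2 ^ r := by positivity
  have h2k : (0:ℝ) < 2 ^ k := by positivity
  have hEnn : (0:ℝ) ≤ (E.card : ℝ) := Nat.cast_nonneg _
  have key : (E.card : ℝ) / 2 ^ r * ((2 : ℝ) ^ (2 * k + 1))⁻¹ * ((r.choose k : ℝ) * (2 ^ r / 2 ^ k))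
      ≤ (E.card : ℝ) / 2 * (m.choose k : ℝ) := by
    have hq : (E.card : ℝ) / 2 ^ r * ((2 : ℝ) ^ (2 * k + 1))⁻¹ * ((r.choose k : ℝ) * (2 ^ r / 2 ^ k))
        = (E.card : ℝ) * (r.choose k : ℝ) / (2 ^ (2 * k + 1) * 2 ^ k) := by
      field_simp
    rw [hq]
    have hineq : (E.card : ℝ) * (r.choose k : ℝ) ≤ (E.card : ℝ) * (2 ^ (3 * k) * (m.choose k : ℝ)) :=
      mul_le_mul_of_nonneg_left hchoose hEnn
    have hden : ((2:ℝ) ^ (2 * k + 1) * 2 ^ k) = 2 ^ (3 * k) * 2 := by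
      rw [← pow_add, ← pow_succ]
      congr 1
      omega
    rw [hden]
    rw [div_le_iff₀ (by positivity)]
    calc (E.card : ℝ) * (r.choose k : ℝ) ≤ (E.card : ℝ) * (2 ^ (3 * k) * (m.choose k : ℝ)) := hineq
      _ = (E.card : ℝ) / 2 * (m.choose k : ℝ) * (2 ^ (3 * k) * 2) := by ring
  refine key.trans (hnumR.trans (le_of_eq ?_))
  push_cast
  ring
end

section
/- Let G be a finite abelian group and 1 ≤ k ≤ r. The planted distribution D1, conditioned on the event that the instance is permissible (i.e., c(X) = 1), is the uniform distribution on the set of permissible instances; equivalently, for every X ∈ G^r with c(X) = 1, D1({X}) = 1/(C(r,k)·|G|^{r−1}). -/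
open Finset

/-- **The planted distribution conditioned on permissibility is uniform.**
For every permissible instance `X` (i.e. `c(X) = 1`),
`D1({X}) = 1/(C(r,k)·|G|^{r−1})`; in particular the conditional distribution of
`D1` given permissibility is uniform on the set of permissible instances. -/
theorem D1_uniform_on_permissible
    (G : Type) [AddCommGroup G] [Fintype G] [DecidableEq G]
    (k r : ℕ) (hk : 1 ≤ k) (hkr : k ≤ r) (X : Fin r → G) (hX : numSol k X = 1) :
    D1pmf k X = 1 / ((r.choose k : ℝ) * (Fintype.card G : ℝ) ^ (r - 1)) := by
  classical
  obtain ⟨S₀, hS₀⟩ := Finset.card_eq_one.mp hX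
  have hS₀mem : S₀ ∈ ((univ : Finset (Fin r)).powersetCard k).filter
      (fun S => ∑ i ∈ S, X i = 0) := by rw [hS₀]; exact Finset.mem_singleton_self _
  rw [Finset.mem_filter, Finset.mem_powersetCard] at hS₀mem
  obtain ⟨⟨_, hScard⟩, hSsum⟩ := hS₀mem
  have hS₀ne : S₀.Nonempty := Finset.card_pos.mp (by omega)
  set i₀ := S₀.min' hS₀ne with hi₀
  have hi₀mem : i₀ ∈ S₀ := S₀.min'_mem hS₀ne
  have key : ((univ : Finset ((Fin r → G) × Finset (Fin r))).filter
      (fun p => p.2.card = k ∧ plant p.1 p.2 = X)).card = Fintype.card G := by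
    rw [← Finset.card_univ (α := G)]
    apply Finset.card_bij' (fun p _ => p.1 i₀) (fun g _ => (Function.update X i₀ g, S₀))
    · intro p hp
      exact Finset.mem_univ _
    · intro g hg
      rw [Finset.mem_filter]
      refine ⟨Finset.mem_univ _, hScard, ?_⟩
      funext j
      simp only [plant, dif_pos hS₀ne, ← hi₀]
      by_cases hj : j = i₀
      · rw [if_pos hj, hj]
        have hsum : ∑ i ∈ S₀.erase i₀, Function.update X i₀ g i
            = ∑ i ∈ S₀.erase i₀, X i := by
          apply Finset.sum_congr rfl
          intro i hi
          exact Function.update_of_ne (Finset.ne_of_mem_erase hi) _ _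
        rw [hsum]
        have := Finset.add_sum_erase S₀ X hi₀mem
        rw [hSsum] at this
        linear_combination (norm := abel) -this
      · rw [if_neg hj]
        exact Function.update_of_ne hj _ _
    · intro p hp
      rw [Finset.mem_filter] at hp
      obtain ⟨-, hcard, hpl⟩ := hp
      have hne : p.2.Nonempty := Finset.card_pos.mp (by omega)
      have hXoff : ∀ j, j ≠ p.2.min' hne → X j = p.1 j := by
        intro j hj
        have := congrFun hpl j
        simpa [plant, dif_pos hne, if_neg hj] using this.symm
      have hsum : ∑ i ∈ p.2, X i = 0 := by
        have hmin := congrFun hpl (p.2.min' hne)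
        simp only [plant, dif_pos hne, if_pos rfl, ↓reduceIte] at hmin
        have hsum2 : ∑ i ∈ p.2.erase (p.2.min' hne), p.1 i
            = ∑ i ∈ p.2.erase (p.2.min' hne), X i := by
          apply Finset.sum_congr rfl
          intro i hi
          exact (hXoff i (Finset.ne_of_mem_erase hi)).symm
        have := Finset.add_sum_erase p.2 X (p.2.min'_mem hne)
        rw [← this, ← hmin, hsum2]
        abel
      have hSeq : p.2 = S₀ := by
        have : p.2 ∈ ((univ : Finset (Fin r)).powersetCard k).filter
            (fun S => ∑ i ∈ S, X i = 0) := by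
          rw [Finset.mem_filter, Finset.mem_powersetCard]
          exact ⟨⟨Finset.subset_univ _, hcard⟩, hsum⟩
        rw [hS₀] at this
        exact Finset.mem_singleton.mp this
      have hmin' : p.2.min' hne = i₀ := by
        subst hSeq; rfl
      have : p = (Function.update X i₀ (p.1 i₀), S₀) := by
        rw [Prod.ext_iff]
        refine ⟨?_, hSeq⟩
        funext j
        show p.1 j = Function.update X i₀ (p.1 i₀) j
        by_cases hj : j = i₀
        · subst hj; simp
        · rw [Function.update_of_ne hj]
          exact (hXoff j (by rw [hmin']; exact hj)).symm
      rw [this]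
      simp
    · intro g hg
      simp
  rw [D1pmf, key]
  have hG : (0:ℝ) < (Fintype.card G : ℝ) := by
    exact_mod_cast Fintype.card_pos
  have hC : (0:ℝ) < (r.choose k : ℝ) := by
    exact_mod_cast Nat.choose_pos hkr
  have hr : r = (r - 1) + 1 := by omega
  rw [hr, pow_succ]
  have hC' : (0:ℝ) < (((r-1+1).choose k : ℕ) : ℝ) := by rw [← hr]; exact hC
  field_simp
  ring
  rw [Nat.add_sub_cancel_left]
end

section
/- Let G be a finite abelian group and 1 ≤ k ≤ r. Fix a k-element subset S ⊆ {1,…,r} and a tuple V = (v_i)_{i∈S} of elements of G with Σ_{i∈S} v_i = 0. Sample X ∈ G^r by setting X_i = v_i for i ∈ S and choosing the remaining r − k entries independently and uniformly at random from G. Then the probability that there exists a k-element subset K ⊆ {1,…,r} with K ≠ S and Σ_{i∈K} X_i = 0 is at most (C(r,k) − 1)/|G|. -/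
open Finset

lemma count_sum_fiber (G : Type) [AddCommGroup G] [Fintype G] [DecidableEq G]
    {r : ℕ} (T : Finset (Fin r)) (hT : T.Nonempty) (c : G) :
    ((univ : Finset (Fin r → G)).filter (fun W => ∑ i ∈ T, W i = c)).card
      = (Fintype.card G) ^ (r - 1) := by
  obtain ⟨j, hj⟩ := hT
  have hsum : ∀ (W : Fin r → G) (e : G),
      ∑ i ∈ T, Function.update W j (W j + e) i = (∑ i ∈ T, W i) + e := by
    intro W e
    rw [Finset.sum_update_of_mem hj, ← Finset.erase_eq,
      ← Finset.add_sum_erase T W hj]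
    abel
  have key : ∀ c d : G,
      ((univ : Finset (Fin r → G)).filter (fun W => ∑ i ∈ T, W i = c)).card
        = ((univ : Finset (Fin r → G)).filter (fun W => ∑ i ∈ T, W i = d)).card := by
    intro c d
    refine Finset.card_bij' (fun W _ => Function.update W j (W j + (d - c)))
      (fun W _ => Function.update W j (W j + (c - d))) ?_ ?_ ?_ ?_
    · intro W hW
      simp only [mem_filter, mem_univ, true_and] at hW ⊢
      rw [hsum, hW]; abel
    · intro W hW
      simp only [mem_filter, mem_univ, true_and] at hW ⊢
      rw [hsum, hW]; abel
    · intro W _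
      funext i
      rcases eq_or_ne i j with rfl | hi
      · simp only [Function.update_self]; abel
      · simp [Function.update_of_ne hi]
    · intro W _
      funext i
      rcases eq_or_ne i j with rfl | hi
      · simp only [Function.update_self]; abel
      · simp [Function.update_of_ne hi]
  have hpart : (Fintype.card G) ^ r
      = ∑ d : G, ((univ : Finset (Fin r → G)).filter (fun W => ∑ i ∈ T, W i = d)).card := by
    rw [← Finset.card_eq_sum_card_fiberwise (fun W _ => Finset.mem_univ (∑ i ∈ T, W i))]
    simp [Finset.card_univ]
  have hconst : ∑ d : G,
      ((univ : Finset (Fin r → G)).filter (fun W => ∑ i ∈ T, W i = d)).card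
      = Fintype.card G *
        ((univ : Finset (Fin r → G)).filter (fun W => ∑ i ∈ T, W i = c)).card := by
    rw [Finset.sum_congr rfl (fun d _ => key d c)]
    simp [mul_comm, Finset.card_univ]
  have hr : 1 ≤ r := j.pos
  have hG : 0 < Fintype.card G := Fintype.card_pos
  have hmul : Fintype.card G * (Fintype.card G) ^ (r - 1)
      = Fintype.card G *
        ((univ : Finset (Fin r → G)).filter (fun W => ∑ i ∈ T, W i = c)).card := by
    rw [← hconst, ← hpart, ← pow_succ', Nat.sub_add_cancel hr]
  exact (Nat.eq_of_mul_eq_mul_left hG hmul).symm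

/-- **Extraneous solutions are rare for a fixed planted solution.**
Fix a `k`-element subset `S ⊆ {1,…,r}` and values `v` on `S` summing to `0`.
Sample `X ∈ G^r` by setting `X_i = v_i` for `i ∈ S` and choosing the remaining
entries independently and uniformly at random. Then the probability that there is
a `k`-element subset `K ≠ S` with `Σ_{i∈K} X_i = 0` is at most `(C(r,k) − 1)/|G|`. -/
theorem fixed_plant_extraneous_solutions
    (G : Type) [AddCommGroup G] [Fintype G] [DecidableEq G]
    (k r : ℕ) (hk : 1 ≤ k) (hkr : k ≤ r)
    (S : Finset (Fin r)) (hS : S.card = k)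
    (v : Fin r → G) (hv : ∑ i ∈ S, v i = 0) :
    ((((univ : Finset (Fin r → G))).filter
        (fun W => ∃ K : Finset (Fin r), K.card = k ∧ K ≠ S ∧
          (∑ i ∈ K, (if i ∈ S then v i else W i)) = 0)).card : ℝ)
        / (Fintype.card G : ℝ) ^ r
      ≤ ((r.choose k : ℝ) - 1) / (Fintype.card G : ℝ) := by
  classical
  set 𝒦 : Finset (Finset (Fin r)) := (Finset.powersetCard k univ).erase S with h𝒦
  -- split the sum condition for a fixed K
  have hsplit : ∀ (K : Finset (Fin r)) (W : Fin r → G),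
      ∑ i ∈ K, (if i ∈ S then v i else W i)
        = (∑ i ∈ K ∩ S, v i) + ∑ i ∈ K \ S, W i := by
    intro K W
    rw [← Finset.sum_filter_add_sum_filter_not K (· ∈ S)]
    congr 1
    · rw [Finset.filter_mem_eq_inter]
      exact Finset.sum_congr rfl (fun i hi => if_pos (Finset.mem_inter.1 hi).2)
    · rw [← Finset.sdiff_eq_filter]
      exact Finset.sum_congr rfl (fun i hi => if_neg (Finset.mem_sdiff.1 hi).2)
  -- union bound: the filtered set is inside a biUnion
  have hsub : ((univ : Finset (Fin r → G))).filter
        (fun W => ∃ K : Finset (Fin r), K.card = k ∧ K ≠ S ∧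
          (∑ i ∈ K, (if i ∈ S then v i else W i)) = 0)
      ⊆ 𝒦.biUnion (fun K => (univ : Finset (Fin r → G)).filter
          (fun W => ∑ i ∈ K, (if i ∈ S then v i else W i) = 0)) := by
    intro W hW
    simp only [mem_filter, mem_univ, true_and] at hW
    obtain ⟨K, hKc, hKne, hK0⟩ := hW
    refine Finset.mem_biUnion.2 ⟨K, ?_, ?_⟩
    · simp [h𝒦, Finset.mem_powersetCard, hKc, hKne]
    · simp [hK0]
  -- card of each piece
  have hpiece : ∀ K ∈ 𝒦, ((univ : Finset (Fin r → G)).filter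
      (fun W => ∑ i ∈ K, (if i ∈ S then v i else W i) = 0)).card
      = (Fintype.card G) ^ (r - 1) := by
    intro K hK
    simp only [h𝒦, Finset.mem_erase, Finset.mem_powersetCard] at hK
    obtain ⟨hKne, _, hKc⟩ := hK
    have hTne : (K \ S).Nonempty := by
      rw [Finset.sdiff_nonempty]
      intro hsub'
      exact hKne (Finset.eq_of_subset_of_card_le hsub' (by rw [hS, hKc]))
    have heq : ((univ : Finset (Fin r → G)).filter
        (fun W => ∑ i ∈ K, (if i ∈ S then v i else W i) = 0))
        = ((univ : Finset (Fin r → G)).filter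
          (fun W => ∑ i ∈ K \ S, W i = -(∑ i ∈ K ∩ S, v i))) := by
      ext W
      simp only [mem_filter, mem_univ, true_and, hsplit]
      constructor
      · intro h
        exact eq_neg_of_add_eq_zero_right h
      · intro h
        rw [h]; abel
    rw [heq, count_sum_fiber G _ hTne]
  -- cardinality of the index set
  have hSmem : S ∈ Finset.powersetCard k univ := by
    rw [Finset.mem_powersetCard]
    exact ⟨Finset.subset_univ S, hS⟩
  have h𝒦card : 𝒦.card = r.choose k - 1 := by
    rw [h𝒦, Finset.card_erase_of_mem hSmem, Finset.card_powersetCard, Finset.card_univ,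
      Fintype.card_fin]
  -- the main counting bound
  have hcard : (((univ : Finset (Fin r → G))).filter
        (fun W => ∃ K : Finset (Fin r), K.card = k ∧ K ≠ S ∧
          (∑ i ∈ K, (if i ∈ S then v i else W i)) = 0)).card
      ≤ (r.choose k - 1) * (Fintype.card G) ^ (r - 1) := by
    calc _ ≤ (𝒦.biUnion (fun K => (univ : Finset (Fin r → G)).filter
          (fun W => ∑ i ∈ K, (if i ∈ S then v i else W i) = 0))).card :=
        Finset.card_le_card hsub
      _ ≤ ∑ K ∈ 𝒦, ((univ : Finset (Fin r → G)).filter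
          (fun W => ∑ i ∈ K, (if i ∈ S then v i else W i) = 0)).card :=
        Finset.card_biUnion_le
      _ = ∑ K ∈ 𝒦, (Fintype.card G) ^ (r - 1) := Finset.sum_congr rfl hpiece
      _ = (r.choose k - 1) * (Fintype.card G) ^ (r - 1) := by
        rw [Finset.sum_const, h𝒦card, smul_eq_mul]
  -- pass to the reals
  have hGpos : (0:ℝ) < (Fintype.card G : ℝ) := by exact_mod_cast Fintype.card_pos
  have hchoose : 1 ≤ r.choose k := Nat.choose_pos hkr
  have hpow : (Fintype.card G : ℝ) ^ r
      = (Fintype.card G : ℝ) ^ (r - 1) * (Fintype.card G : ℝ) := by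
    rw [← pow_succ, Nat.sub_add_cancel (le_trans hk hkr)]
  calc (((((univ : Finset (Fin r → G))).filter
        (fun W => ∃ K : Finset (Fin r), K.card = k ∧ K ≠ S ∧
          (∑ i ∈ K, (if i ∈ S then v i else W i)) = 0)).card : ℝ))
        / (Fintype.card G : ℝ) ^ r
      ≤ (((r.choose k - 1) * (Fintype.card G) ^ (r - 1) : ℕ) : ℝ)
        / (Fintype.card G : ℝ) ^ r := by
        gcongr

    _ = ((r.choose k : ℝ) - 1) / (Fintype.card G : ℝ) := by
        rw [Nat.cast_mul, Nat.cast_sub hchoose]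
        push_cast
        rw [hpow, mul_comm ((r.choose k : ℝ) - 1), mul_div_mul_left _ _
          (by positivity : ((Fintype.card G : ℝ)) ^ (r - 1) ≠ 0)]
end

section
/- Let A be a real symmetric n×n matrix with nonnegative entries whose row sums are all equal to d > 0 (the adjacency matrix of a d-regular multigraph), and let d = λ₁ ≥ λ₂ ≥ … ≥ λₙ be its eigenvalues listed with multiplicity; set λ := max(|λ₂|, |λₙ|). Let γ ∈ (0,1], and let S, T ⊆ {1,…,n} satisfy |T| ≥ (γ/8)·n and Σ_{i∈S} Σ_{j∈T} A_{ij} ≤ (d·γ/16)·|S|. Then |S| ≤ 32·(λ/d)²·n/γ. -/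
open Finset Polynomial

open Matrix

set_option maxHeartbeats 1000000


lemma charpoly_conj_aux {R : Type*} [CommRing R] {m : Type*} [Fintype m] [DecidableEq m]
    (M N B : Matrix m m R) (h1 : M * N = 1) :
    (M * B * N).charpoly = B.charpoly := by
  have hmap : (C : R →+* R[X]).mapMatrix M * (C : R →+* R[X]).mapMatrix N = 1 := by
    rw [← RingHom.map_mul, h1, RingHom.map_one]
  have key : charmatrix (M * B * N) =
      (C : R →+* R[X]).mapMatrix M * charmatrix B * (C : R →+* R[X]).mapMatrix N := by
    unfold charmatrix
    rw [mul_sub, sub_mul, RingHom.map_mul, RingHom.map_mul]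
    congr 1
    have hs : (scalar m) (X : R[X]) = (X : R[X]) • (1 : Matrix m m R[X]) := by
      rw [Matrix.scalar_apply, Matrix.smul_one_eq_diagonal]
    rw [hs, mul_smul_comm, smul_mul_assoc, mul_one, hmap]
  unfold Matrix.charpoly
  rw [key, det_mul, det_mul, mul_comm, ← mul_assoc, mul_comm (det ((C : R →+* R[X]).mapMatrix N)),
    ← det_mul, hmap, det_one, one_mul]

lemma herm_charpoly {n : ℕ} (A : Matrix (Fin n) (Fin n) ℝ) (hA : A.IsHermitian) :
    A.charpoly = ∏ k, (X - C (hA.eigenvalues k)) := by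
  have hst := hA.spectral_theorem
  have h1 : (hA.eigenvectorUnitary : Matrix (Fin n) (Fin n) ℝ) *
      (star hA.eigenvectorUnitary : Matrix (Fin n) (Fin n) ℝ) = 1 := by
    exact (Matrix.mem_unitaryGroup_iff).mp hA.eigenvectorUnitary.2
  calc A.charpoly
      = ((hA.eigenvectorUnitary : Matrix (Fin n) (Fin n) ℝ) *
          diagonal (RCLike.ofReal ∘ hA.eigenvalues) *
          (star hA.eigenvectorUnitary : Matrix (Fin n) (Fin n) ℝ)).charpoly := by
          rw [← Unitary.conjStarAlgAut_apply (S := ℝ), ← hst]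
    _ = (diagonal (RCLike.ofReal ∘ hA.eigenvalues)).charpoly := by
        rw [charpoly_conj_aux _ _ _ h1]
    _ = ∏ k, (X - C (hA.eigenvalues k)) := by
        rw [charpoly_of_upperTriangular _ (Matrix.blockTriangular_diagonal _)]
        simp [RCLike.ofReal_real_eq_id]


lemma bilin_bound {n : ℕ} (hn : 0 < n) (A : Matrix (Fin n) (Fin n) ℝ) (hA : A.IsHermitian)
    (d lam : ℝ) (hlam0 : 0 ≤ lam)
    (hrow : ∀ i, ∑ j, A i j = d)
    (hquad : ∀ z : Fin n → ℝ, |z ⬝ᵥ A *ᵥ z| ≤ d * ∑ i, z i ^ 2)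
    (hspec : ∀ k, hA.eigenvalues k ≠ d → |hA.eigenvalues k| ≤ lam)
    (hcount : lam < d → ∀ k k', hA.eigenvalues k = d → hA.eigenvalues k' = d → k = k')
    (x y : Fin n → ℝ) (hx : ∑ i, x i = 0) :
    |x ⬝ᵥ A *ᵥ y| ≤ lam * Real.sqrt (∑ i, x i ^ 2) * Real.sqrt (∑ i, y i ^ 2) := by
  classical
  set ν := hA.eigenvalues with hν
  set u := hA.eigenvectorBasis with hu
  set f := Matrix.toEuclideanLin A with hf
  have hdot : ∀ a b : EuclideanSpace ℝ (Fin n),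
      (inner ℝ a (f b) : ℝ) = (fun i => a i) ⬝ᵥ (A *ᵥ fun i => b i) := by
    intro a b
    simp [PiLp.inner_apply, RCLike.inner_apply, dotProduct, hf, Matrix.toEuclideanLin_apply,
      starRingEnd_apply, star_trivial, Matrix.mulVec,
      PiLp.toLp_apply, WithLp.equiv_symm_apply, mul_comm]
  have hsym : (Matrix.toEuclideanLin A).IsSymmetric := Matrix.isHermitian_iff_isSymmetric.1 hA
  have hfu : ∀ k, f (u k) = ν k • u k := by
    intro k
    have h1 := hA.mulVec_eigenvectorBasis k
    ext i
    have h2 := congrFun h1 i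
    simpa [hf, Matrix.toEuclideanLin_apply, PiLp.toLp_apply, WithLp.equiv_symm_apply]
      using h2
  have hrepr : ∀ (z : EuclideanSpace ℝ (Fin n)) k, u.repr (f z) k = ν k * u.repr z k := by
    intro z k
    rw [u.repr_apply_apply, u.repr_apply_apply, ← hsym (u k) z, hfu k, real_inner_smul_left]
  -- inner via coordinates
  have hinner : ∀ a b : EuclideanSpace ℝ (Fin n),
      (inner ℝ a b : ℝ) = ∑ k, u.repr a k * u.repr b k := by
    intro a b
    rw [← u.repr.inner_map_map a b]
    simp only [PiLp.inner_apply, RCLike.inner_apply, starRingEnd_apply, star_trivial, mul_comm]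
  -- Parseval
  have hpars : ∀ a : EuclideanSpace ℝ (Fin n), ∑ k, (u.repr a k)^2 = ‖a‖^2 := by
    intro a
    have h1 : ‖u.repr a‖ = ‖a‖ := u.repr.norm_map a
    rw [← h1, EuclideanSpace.norm_eq, Real.sq_sqrt (by positivity)]
    simp [sq_abs]
  -- eigenvalue bound from quadratic form
  have hνd : ∀ k, |ν k| ≤ d := by
    intro k
    have h1 : (inner ℝ (u k) (f (u k)) : ℝ) = ν k := by
      rw [hfu k, real_inner_smul_right, real_inner_self_eq_norm_sq, u.orthonormal.1 k]
      simp
    have h2 : ∑ i, (u k i)^2 = 1 := by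
      have h3 := u.orthonormal.1 k
      rw [EuclideanSpace.norm_eq] at h3
      have h4 : ∑ i, ‖u k i‖^2 = 1 := by
        rw [← Real.sq_sqrt (show (0:ℝ) ≤ ∑ i, ‖u k i‖^2 by positivity), h3]
        norm_num
      simpa [sq_abs] using h4
    have h5 := hquad (fun i => u k i)
    rw [h2] at h5
    rw [← hdot (u k) (u k)] at h5
    rw [h1] at h5
    simpa using h5
  -- the all-ones vector
  set ones : EuclideanSpace ℝ (Fin n) := (WithLp.equiv 2 (Fin n → ℝ)).symm (fun _ => 1) with hones
  have hfones : f ones = d • ones := by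
    ext i
    simp [hf, hones, Matrix.toEuclideanLin_apply,
      PiLp.toLp_apply, WithLp.equiv_symm_apply, Matrix.mulVec, dotProduct, hrow i]
  set x' : EuclideanSpace ℝ (Fin n) := (WithLp.equiv 2 (Fin n → ℝ)).symm x with hx'
  set y' : EuclideanSpace ℝ (Fin n) := (WithLp.equiv 2 (Fin n → ℝ)).symm y with hy'
  set p : Fin n → ℝ := fun k => u.repr x' k with hp
  set q : Fin n → ℝ := fun k => u.repr y' k with hq
  -- per-k bound
  have hk : ∀ k, |p k * (ν k * q k)| ≤ lam * (|p k| * |q k|) := by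
    intro k
    have habs : |p k * (ν k * q k)| = |ν k| * (|p k| * |q k|) := by
      rw [abs_mul, abs_mul]; ring
    by_cases hkd : ν k = d
    · rcases le_or_gt d lam with hcase | hcase
      · rw [habs]
        exact mul_le_mul_of_nonneg_right ((hνd k).trans hcase) (by positivity)
      · -- lam < d : show p k = 0
        have huniq := hcount hcase
        have hones0 : ∀ k', k' ≠ k → u.repr ones k' = 0 := by
          intro k' hk'
          have h1 : ν k' * u.repr ones k' = d * u.repr ones k' := by
            rw [← hrepr ones k', hfones]
            simp
          have h2 : ν k' ≠ d := fun hc => hk' (huniq k' k hc hkd)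
          by_contra h3
          exact h2 (mul_right_cancel₀ h3 h1)
        have hix : (inner ℝ ones x' : ℝ) = 0 := by
          simp only [PiLp.inner_apply, RCLike.inner_apply, starRingEnd_apply, star_trivial]
          simpa [hones, hx', PiLp.toLp_apply, WithLp.equiv_symm_apply] using hx
        have hsum : (inner ℝ ones x' : ℝ) = u.repr ones k * p k := by
          rw [hinner ones x']
          rw [Finset.sum_eq_single k]
          · intro k' _ hk'
            rw [hones0 k' hk', zero_mul]
          · intro h; exact absurd (Finset.mem_univ k) h
        have honesk : u.repr ones k ≠ 0 := by
          intro h0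
          have hall : u.repr ones = 0 := by
            ext k'
            by_cases hk' : k' = k
            · rw [hk']; simpa using h0
            · simpa using hones0 k' hk'
          have hzero : ones = 0 := by
            have := congrArg u.repr.symm hall
            simp at this
            exact this
          have : (1:ℝ) = 0 := by
            have := congrFun (congrArg (WithLp.equiv 2 (Fin n → ℝ)) hzero) ⟨0, hn⟩
            simpa [hones] using this
          norm_num at this
        have hp0 : p k = 0 := by
          rcases mul_eq_zero.1 (hsum.symm.trans hix) with h | h
          · exact absurd h honesk
          · exact h
        rw [hp0]
        simp [mul_nonneg hlam0 (mul_nonneg (abs_nonneg _) (abs_nonneg _))]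
    · rw [habs]
      exact mul_le_mul_of_nonneg_right (hspec k hkd) (by positivity)
  -- assemble
  have hxfy : x ⬝ᵥ A *ᵥ y = ∑ k, p k * (ν k * q k) := by
    have h1 := hdot x' y'
    have h2 : (fun i => x' i) ⬝ᵥ (A *ᵥ fun i => y' i) = x ⬝ᵥ A *ᵥ y := by
      simp [hx', hy', PiLp.toLp_apply, WithLp.equiv_symm_apply]
    rw [h2] at h1
    rw [← h1, hinner x' (f y')]
    congr 1
    ext k
    rw [hrepr y' k]
  have hpx : ∑ k, p k ^ 2 = ‖x'‖^2 := hpars x'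
  have hqy : ∑ k, q k ^ 2 = ‖y'‖^2 := hpars y'
  have hnx : Real.sqrt (∑ i, x i ^ 2) = ‖x'‖ := by
    rw [EuclideanSpace.norm_eq]
    congr 1
    refine Finset.sum_congr rfl fun i _ => ?_
    simp [hx', PiLp.toLp_apply, WithLp.equiv_symm_apply, sq_abs]
  have hny : Real.sqrt (∑ i, y i ^ 2) = ‖y'‖ := by
    rw [EuclideanSpace.norm_eq]
    congr 1
    refine Finset.sum_congr rfl fun i _ => ?_
    simp [hy', PiLp.toLp_apply, WithLp.equiv_symm_apply, sq_abs]
  have hcs : ∑ k, |p k| * |q k| ≤ ‖x'‖ * ‖y'‖ := by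
    have h2 : (∑ k, |p k| * |q k|)^2 ≤ (‖x'‖ * ‖y'‖)^2 := by
      have h3 := Finset.sum_mul_sq_le_sq_mul_sq Finset.univ (fun k => |p k|) (fun k => |q k|)
      simp only [sq_abs] at h3
      calc (∑ k, |p k| * |q k|)^2 ≤ (∑ k, p k ^2) * (∑ k, q k ^2) := h3
      _ = (‖x'‖ * ‖y'‖)^2 := by rw [hpx, hqy]; ring
    have h3 : 0 ≤ ∑ k, |p k| * |q k| := by positivity
    have h4 := Real.sqrt_le_sqrt h2
    rwa [Real.sqrt_sq h3, Real.sqrt_sq (by positivity)] at h4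
  calc |x ⬝ᵥ A *ᵥ y| = |∑ k, p k * (ν k * q k)| := by rw [hxfy]
  _ ≤ ∑ k, |p k * (ν k * q k)| := Finset.abs_sum_le_sum_abs _ _
  _ ≤ ∑ k, lam * (|p k| * |q k|) := Finset.sum_le_sum (fun k _ => hk k)
  _ = lam * ∑ k, |p k| * |q k| := by rw [← Finset.mul_sum]
  _ ≤ lam * (‖x'‖ * ‖y'‖) := mul_le_mul_of_nonneg_left hcs hlam0
  _ = lam * Real.sqrt (∑ i, x i ^ 2) * Real.sqrt (∑ i, y i ^ 2) := by rw [hnx, hny]; ring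



/-- **Expander-mixing consequence for regular multigraphs.**
Let `A` be a real symmetric `n×n` matrix with nonnegative entries and all row sums
equal to `d > 0`, with eigenvalues (listed with multiplicity, in decreasing order)
`d = μ₀ ≥ μ₁ ≥ … ≥ μ_{n−1}`, and set `λ := max(|μ₁|, |μ_{n−1}|)`. If `γ ∈ (0,1]`
and `S, T ⊆ {1,…,n}` satisfy `|T| ≥ (γ/8)·n` and
`Σ_{i∈S} Σ_{j∈T} A i j ≤ (d·γ/16)·|S|`, then `|S| ≤ 32·(λ/d)²·n/γ`. -/
theorem expander_mixing_bad_set_bound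
    (n : ℕ) (hn : 2 ≤ n) (A : Matrix (Fin n) (Fin n) ℝ)
    (hsymm : A.IsSymm) (hnonneg : ∀ i j, 0 ≤ A i j)
    (d : ℝ) (hd : 0 < d) (hreg : ∀ i, ∑ j, A i j = d)
    (μ : Fin n → ℝ) (hmono : Antitone μ)
    (hchar : A.charpoly = ∏ i, (X - C (μ i)))
    (hμ0 : μ ⟨0, by omega⟩ = d)
    (γ : ℝ) (hγ0 : 0 < γ) (hγ1 : γ ≤ 1)
    (S T : Finset (Fin n))
    (hT : (γ / 8) * (n : ℝ) ≤ (T.card : ℝ))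
    (hST : ∑ i ∈ S, ∑ j ∈ T, A i j ≤ (d * γ / 16) * (S.card : ℝ)) :
    (S.card : ℝ)
      ≤ 32 * ((max |μ ⟨1, by omega⟩| |μ ⟨n - 1, by omega⟩|) / d) ^ 2 * (n : ℝ) / γ := by
  classical
  have hn0 : 0 < n := by omega
  have hnR : (0:ℝ) < n := by exact_mod_cast hn0
  set lam : ℝ := max |μ ⟨1, by omega⟩| |μ ⟨n - 1, by omega⟩| with hlam
  have hlam0 : 0 ≤ lam := le_trans (abs_nonneg _) (le_max_left _ _)
  -- Hermitian
  have hH : A.IsHermitian := by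
    ext i j
    simp only [conjTranspose_apply, star_trivial]
    exact hsymm.apply i j
  set ν : Fin n → ℝ := hH.eigenvalues with hνdef
  -- column sums
  have hcol : ∀ j, ∑ i, A i j = d := by
    intro j
    calc ∑ i, A i j = ∑ i, A j i := Finset.sum_congr rfl (fun i _ => hsymm.apply j i)
    _ = d := hreg j
  -- quadratic form bound
  have hquad : ∀ z : Fin n → ℝ, |z ⬝ᵥ A *ᵥ z| ≤ d * ∑ i, z i ^ 2 := by
    intro z
    have e0 : z ⬝ᵥ A *ᵥ z = ∑ i, ∑ j, z i * (A i j * z j) := by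
      simp [dotProduct, Matrix.mulVec, Finset.mul_sum]
    have e1 : ∑ i, ∑ j, A i j * z i ^ 2 = d * ∑ i, z i ^ 2 := by
      rw [Finset.mul_sum]
      refine Finset.sum_congr rfl fun i _ => ?_
      rw [← Finset.sum_mul, hreg i]
    have e2 : ∑ i, ∑ j, A i j * z j ^ 2 = d * ∑ i, z i ^ 2 := by
      rw [Finset.sum_comm, Finset.mul_sum]
      refine Finset.sum_congr rfl fun j _ => ?_
      rw [← Finset.sum_mul, hcol j]
    calc |z ⬝ᵥ A *ᵥ z| = |∑ i, ∑ j, z i * (A i j * z j)| := by rw [e0]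
    _ ≤ ∑ i, |∑ j, z i * (A i j * z j)| := Finset.abs_sum_le_sum_abs _ _
    _ ≤ ∑ i, ∑ j, |z i * (A i j * z j)| :=
        Finset.sum_le_sum fun i _ => Finset.abs_sum_le_sum_abs _ _
    _ = ∑ i, ∑ j, A i j * (|z i| * |z j|) := by
        refine Finset.sum_congr rfl fun i _ => Finset.sum_congr rfl fun j _ => ?_
        rw [abs_mul, abs_mul, abs_of_nonneg (hnonneg i j)]
        ring
    _ ≤ ∑ i, ∑ j, A i j * ((z i ^ 2 + z j ^ 2) / 2) := by
        refine Finset.sum_le_sum fun i _ => Finset.sum_le_sum fun j _ => ?_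
        refine mul_le_mul_of_nonneg_left ?_ (hnonneg i j)
        have h := two_mul_le_add_sq |z i| |z j|
        rw [sq_abs, sq_abs] at h
        linarith only [h]
    _ = (∑ i, ∑ j, A i j * z i ^ 2) / 2 + (∑ i, ∑ j, A i j * z j ^ 2) / 2 := by
        simp only [Finset.sum_div, ← Finset.sum_add_distrib]
        refine Finset.sum_congr rfl fun i _ => Finset.sum_congr rfl fun j _ => by ring
    _ = d * ∑ i, z i ^ 2 := by rw [e1, e2]; ring
  -- charpoly and multiset of eigenvalues
  have hchar2 : A.charpoly = ∏ k, (X - C (ν k)) := herm_charpoly A hH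
  have hprod : ∏ i, (X - C (μ i)) = ∏ k, (X - C (ν k)) := by rw [← hchar, hchar2]
  have hroots : ∀ (g : Fin n → ℝ), (∏ i, (X - C (g i))).roots = Finset.univ.val.map g := by
    intro g
    rw [Finset.prod_eq_multiset_prod]
    have h3 : Finset.univ.val.map (fun i => X - C (g i))
        = (Finset.univ.val.map g).map (fun a => X - C a) := by
      rw [Multiset.map_map]; rfl
    rw [h3, Polynomial.roots_multiset_prod_X_sub_C]
  have hms : Multiset.map μ Finset.univ.val = Multiset.map ν Finset.univ.val := by
    rw [← hroots μ, ← hroots ν, hprod]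
  -- eigenvalue bounds
  have habsmax : ∀ i : Fin n, i ≠ ⟨0, by omega⟩ → |μ i| ≤ lam := by
    intro i hi0
    have hpos : 0 < i.val := Nat.pos_of_ne_zero (fun h => hi0 (Fin.ext h))
    have h1le : (⟨1, by omega⟩ : Fin n) ≤ i := by
      exact hpos
    have hlei : i ≤ (⟨n - 1, by omega⟩ : Fin n) := by
      have := i.isLt
      exact (show i.val ≤ n - 1 by omega)
    have h4 := abs_le_max_abs_abs (hmono hlei) (hmono h1le)
    rw [hlam, max_comm]
    exact h4
  have hspec : ∀ k, ν k ≠ d → |ν k| ≤ lam := by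
    intro k hk
    have hmem : ν k ∈ Multiset.map μ Finset.univ.val := by
      rw [hms]
      exact Multiset.mem_map_of_mem _ (Finset.mem_univ_val _)
    obtain ⟨i, _, hi⟩ := Multiset.mem_map.1 hmem
    have hi0 : i ≠ ⟨0, by omega⟩ := by
      rintro rfl
      exact hk (hi ▸ hμ0 ▸ rfl)
    rw [← hi]
    exact habsmax i hi0
  -- multiplicity-one argument
  have hcnt : ∀ f : Fin n → ℝ,
      Multiset.count d (Finset.univ.val.map f) = (Finset.univ.filter (fun i => d = f i)).card := by
    intro f
    rw [Multiset.count_map]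
    rfl
  have hcount : lam < d → ∀ k k', ν k = d → ν k' = d → k = k' := by
    intro hld k k' hk hk'
    have hμfilter : (Finset.univ.filter (fun i => d = μ i)) = {(⟨0, by omega⟩ : Fin n)} := by
      apply Finset.eq_singleton_iff_unique_mem.2
      constructor
      · exact Finset.mem_filter.2 ⟨Finset.mem_univ _, hμ0.symm⟩
      · intro i hi
        by_contra hne
        have h5 := habsmax i hne
        have h6 : μ i = d := (Finset.mem_filter.1 hi).2.symm
        rw [h6] at h5
        have : |d| = d := abs_of_pos hd
        rw [this] at h5
        linarith only [h5, hld]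
    have hcard : (Finset.univ.filter (fun k => d = ν k)).card = 1 := by
      rw [← hcnt ν, ← hms, hcnt μ, hμfilter, Finset.card_singleton]
    obtain ⟨a, ha⟩ := Finset.card_eq_one.1 hcard
    have hka : k ∈ Finset.univ.filter (fun k => d = ν k) :=
      Finset.mem_filter.2 ⟨Finset.mem_univ _, hk.symm⟩
    have hk'a : k' ∈ Finset.univ.filter (fun k => d = ν k) :=
      Finset.mem_filter.2 ⟨Finset.mem_univ _, hk'.symm⟩
    rw [ha, Finset.mem_singleton] at hka hk'a
    rw [hka, hk'a]
  -- set up vectors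
  set s : ℝ := (S.card : ℝ) with hsdef
  set t : ℝ := (T.card : ℝ) with htdef
  have hs0 : 0 ≤ s := Nat.cast_nonneg _
  have ht0 : 0 < t := lt_of_lt_of_le (by positivity) hT
  set xv : Fin n → ℝ := fun i => (if i ∈ S then (1:ℝ) else 0) - s / n with hxvdef
  set yv : Fin n → ℝ := fun j => if j ∈ T then (1:ℝ) else 0 with hyvdef
  have hchiS : ∑ i, (if i ∈ S then (1:ℝ) else 0) = s := by
    rw [Finset.sum_ite_mem, Finset.univ_inter, Finset.sum_const, nsmul_eq_mul, mul_one]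
  have hchiT : ∑ j, (if j ∈ T then (1:ℝ) else 0) = t := by
    rw [Finset.sum_ite_mem, Finset.univ_inter, Finset.sum_const, nsmul_eq_mul, mul_one]
  have hxvsum : ∑ i, xv i = 0 := by
    rw [hxvdef]
    rw [Finset.sum_sub_distrib, hchiS, Finset.sum_const, Finset.card_univ, Fintype.card_fin,
      nsmul_eq_mul]
    field_simp
    ring
  set E' : ℝ := ∑ i ∈ S, ∑ j ∈ T, A i j with hE'def
  have hrowT : ∀ i, ∑ j, A i j * yv j = ∑ j ∈ T, A i j := by
    intro i
    rw [hyvdef]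
    simp only [mul_ite, mul_one, mul_zero]
    rw [Finset.sum_ite_mem, Finset.univ_inter]
  have hE : xv ⬝ᵥ A *ᵥ yv = E' - d * s * t / n := by
    have hdot2 : xv ⬝ᵥ A *ᵥ yv = ∑ i, xv i * ∑ j, A i j * yv j := by
      simp [dotProduct, Matrix.mulVec]
    rw [hdot2]
    have h1 : ∑ i, xv i * ∑ j, A i j * yv j
        = ∑ i, (if i ∈ S then (1:ℝ) else 0) * (∑ j ∈ T, A i j)
          - (s / n) * ∑ i, ∑ j ∈ T, A i j := by
      rw [Finset.mul_sum, ← Finset.sum_sub_distrib]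
      refine Finset.sum_congr rfl fun i _ => ?_
      rw [hrowT i, hxvdef]
      ring
    rw [h1]
    have h2 : ∑ i, (if i ∈ S then (1:ℝ) else 0) * (∑ j ∈ T, A i j) = E' := by
      simp only [ite_mul, one_mul, zero_mul]
      rw [Finset.sum_ite_mem, Finset.univ_inter, hE'def]
    have h3 : ∑ i, ∑ j ∈ T, A i j = t * d := by
      rw [show ∑ i, ∑ j ∈ T, A i j = ∑ j ∈ T, ∑ i, A i j from Finset.sum_comm]
      rw [htdef]
      rw [Finset.sum_congr rfl (fun j _ => hcol j), Finset.sum_const, nsmul_eq_mul]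
    rw [h2, h3]
    ring
  have hxv2 : ∑ i, xv i ^ 2 ≤ s := by
    have h1 : ∑ i, xv i ^ 2 = s - s ^ 2 / n := by
      rw [hxvdef]
      have h2 : ∀ i : Fin n, ((if i ∈ S then (1:ℝ) else 0) - s / n) ^ 2
          = (if i ∈ S then (1:ℝ) else 0) - 2 * (s / n) * (if i ∈ S then (1:ℝ) else 0)
            + (s / n) ^ 2 := by
        intro i
        split <;> ring
      rw [Finset.sum_congr rfl fun i _ => h2 i]
      rw [Finset.sum_add_distrib, Finset.sum_sub_distrib, hchiS, ← Finset.mul_sum, hchiS,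
        Finset.sum_const, Finset.card_univ, Fintype.card_fin, nsmul_eq_mul]
      field_simp
      ring
    rw [h1]
    have : 0 ≤ s ^ 2 / n := by positivity
    linarith only [this]
  have hyv2 : ∑ j, yv j ^ 2 = t := by
    rw [hyvdef]
    have h2 : ∀ j : Fin n, (if j ∈ T then (1:ℝ) else 0) ^ 2 = (if j ∈ T then (1:ℝ) else 0) := by
      intro j; split <;> norm_num
    rw [Finset.sum_congr rfl fun j _ => h2 j, hchiT]
  -- apply the bilinear bound
  have hbil := bilin_bound hn0 A hH d lam hlam0 hreg hquad hspec hcount xv yv hxvsum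
  have hsq : Real.sqrt (∑ i, xv i ^ 2) ≤ Real.sqrt s := Real.sqrt_le_sqrt hxv2
  have hsqy : Real.sqrt (∑ j, yv j ^ 2) = Real.sqrt t := by rw [hyv2]
  have hbil2 : |xv ⬝ᵥ A *ᵥ yv| ≤ lam * Real.sqrt s * Real.sqrt t := by
    calc |xv ⬝ᵥ A *ᵥ yv| ≤ lam * Real.sqrt (∑ i, xv i ^ 2) * Real.sqrt (∑ i, yv i ^ 2) := hbil
    _ ≤ lam * Real.sqrt s * Real.sqrt t := by
        rw [hsqy]
        exact mul_le_mul_of_nonneg_right (mul_le_mul_of_nonneg_left hsq hlam0)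
          (Real.sqrt_nonneg _)
  set σ : ℝ := Real.sqrt s with hσdef
  set τ : ℝ := Real.sqrt t with hτdef
  have hσ2 : σ ^ 2 = s := Real.sq_sqrt hs0
  have hτ2 : τ ^ 2 = t := Real.sq_sqrt ht0.le
  have hσ0 : 0 ≤ σ := Real.sqrt_nonneg _
  have hτ0 : 0 ≤ τ := Real.sqrt_nonneg _
  -- lower bound on E'
  have hlow : d * s * t / n - lam * σ * τ ≤ E' := by
    have h1 : -(lam * σ * τ) ≤ xv ⬝ᵥ A *ᵥ yv := neg_le_of_abs_le hbil2
    rw [hE] at h1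
    linarith only [h1]
  -- key inequality
  have h8 : γ * n ≤ 8 * t := by linarith only [hT]
  have h10 : d * γ / 16 * s ≤ d * t / (2 * n) * s := by
    have h11 : d * γ / 16 ≤ d * t / (2 * n) := by
      rw [div_le_div_iff₀ (by norm_num) (by positivity)]
      linarith only [mul_le_mul_of_nonneg_left h8 hd.le]
    exact mul_le_mul_of_nonneg_right h11 hs0
  have hkey : d * t * s / (2 * n) ≤ lam * σ * τ := by
    have h12 : d * s * t / n - lam * σ * τ ≤ d * t / (2 * n) * s := le_trans hlow (le_trans hST h10)
    have h13 : d * s * t / n - d * t / (2 * n) * s = d * t * s / (2 * n) := by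
      field_simp
      ring
    linarith only [h12, h13]
  -- finish
  rcases eq_or_lt_of_le hs0 with hs | hs
  · rw [← hs]
    positivity
  · have hσpos : 0 < σ := Real.sqrt_pos.2 hs
    have h13 : (d * t * s / (2 * n)) ^ 2 ≤ (lam * σ * τ) ^ 2 :=
      pow_le_pow_left₀ (by positivity) hkey 2
    have h14 : (d * t * s) ^ 2 ≤ lam ^ 2 * s * t * (2 * n) ^ 2 := by
      have h15 : (lam * σ * τ) ^ 2 = lam ^ 2 * s * t := by
        rw [mul_pow, mul_pow, hσ2, hτ2]
      rw [div_pow] at h13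
      rw [h15] at h13
      exact (div_le_iff₀ (by positivity)).1 h13
    have hst : (0:ℝ) < s * t := mul_pos hs ht0
    have h16 : d ^ 2 * t * s ≤ 4 * lam ^ 2 * n ^ 2 := by
      have h17 : (d ^ 2 * t * s) * (s * t) ≤ (4 * lam ^ 2 * n ^ 2) * (s * t) := by
        calc (d ^ 2 * t * s) * (s * t) = (d * t * s) ^ 2 := by ring
        _ ≤ lam ^ 2 * s * t * (2 * n) ^ 2 := h14
        _ = (4 * lam ^ 2 * n ^ 2) * (s * t) := by ring
      exact le_of_mul_le_mul_right h17 hst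
    have h18 : s * (γ * d ^ 2) ≤ 32 * lam ^ 2 * n := by
      have h19 : (s * (γ * d ^ 2)) * n ≤ (32 * lam ^ 2 * n) * n := by
        have h20 : (γ * n) * (d ^ 2 * s) ≤ (8 * t) * (d ^ 2 * s) :=
          mul_le_mul_of_nonneg_right h8 (by positivity)
        linarith only [h16, h20]
      exact le_of_mul_le_mul_right h19 hnR
    rw [div_pow, le_div_iff₀ hγ0]
    rw [show 32 * (lam ^ 2 / d ^ 2) * n = (32 * lam ^ 2 * n) / d ^ 2 by ring]
    rw [le_div_iff₀ (by positivity)]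
    calc s * γ * d ^ 2 = s * (γ * d ^ 2) := by ring
    _ ≤ 32 * lam ^ 2 * n := h18
end

section
/- Let G be a finite abelian group and let k, s, r be integers with 1 ≤ k ≤ s ≤ r. Consider the joint planted sampling on G^r: draw X' uniformly from G^r, draw an independent uniformly random k-element subset S ⊆ {1,…,r}, let i be the smallest element of S, and let X be X' with X_i replaced by −Σ_{j∈S, j≠i} X'_j. Independently, let π : {1,…,s} → {1,…,r} be a uniformly random injection. Then: (a) Pr[S ⊆ range(π)] = Π_{i=0}^{k−1} (s − i)/(r − i); and (b) conditioned on the event S ⊆ range(π), the array (X_{π(1)}, …, X_{π(s)}) ∈ G^s is distributed according to the planted distribution D1 on G^s (with the same k). -/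
open Finset

/-- The probability, over a uniformly random `k`-element subset `S ⊆ {1,…,r}` and an
independent uniformly random injection `π : {1,…,s} → {1,…,r}`, that `S ⊆ range π`. -/
noncomputable def coverProb (k s r : ℕ) : ℝ :=
  ((Finset.filter (fun p : Finset (Fin r) × (Fin s ↪ Fin r) =>
      p.1.card = k ∧ p.1 ⊆ (univ : Finset (Fin s)).map p.2) univ).card : ℝ)
    / ((Finset.filter (fun p : Finset (Fin r) × (Fin s ↪ Fin r) =>
      p.1.card = k) univ).card : ℝ)

/-- The conditional pmf of the pulled-back array `(X_{π(1)}, …, X_{π(s)})`, where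
`X = plant X' S` with `X'` uniform on `G^r`, `S` a uniformly random `k`-element
subset, `π` an independent uniformly random injection, conditioned on `S ⊆ range π`. -/
noncomputable def condPulledPmf (G : Type) [AddCommGroup G] [Fintype G] [DecidableEq G]
    (k s r : ℕ) (Z : Fin s → G) : ℝ :=
  ((Finset.filter (fun q : (Fin r → G) × Finset (Fin r) × (Fin s ↪ Fin r) =>
      q.2.1.card = k ∧ q.2.1 ⊆ (univ : Finset (Fin s)).map q.2.2
        ∧ (fun j => plant q.1 q.2.1 (q.2.2 j)) = Z) univ).card : ℝ)
    / ((Finset.filter (fun q : (Fin r → G) × Finset (Fin r) × (Fin s ↪ Fin r) =>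
      q.2.1.card = k ∧ q.2.1 ⊆ (univ : Finset (Fin s)).map q.2.2) univ).card : ℝ)

section Aux

lemma card_filter_prod_left {A B : Type} [Fintype A] [Fintype B]
    (P : A → B → Prop) [∀ a b, Decidable (P a b)] :
    ((univ : Finset (A × B)).filter (fun p => P p.1 p.2)).card
      = ∑ a : A, ((univ : Finset B).filter (fun b => P a b)).card := by
  rw [Finset.card_filter, Fintype.sum_prod_type]
  simp only [Finset.card_filter]

lemma card_filter_prod_right {A B : Type} [Fintype A] [Fintype B]
    (P : A → B → Prop) [∀ a b, Decidable (P a b)] :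
    ((univ : Finset (A × B)).filter (fun p => P p.1 p.2)).card
      = ∑ b : B, ((univ : Finset A).filter (fun a => P a b)).card := by
  rw [Finset.card_filter, Fintype.sum_prod_type_right]
  simp only [Finset.card_filter]

variable {G : Type} [AddCommGroup G] [Fintype G] [DecidableEq G]

lemma count_agree {α : Type} [Fintype α] [DecidableEq α] (A : Finset α) (g : α → G) :
    ((univ : Finset (α → G)).filter (fun f => ∀ a ∈ A, f a = g a)).card
      = Fintype.card G ^ (Fintype.card α - A.card) := by
  have h1 : ((univ : Finset (α → G)).filter (fun f => ∀ a ∈ A, f a = g a))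
      = Fintype.piFinset (fun a => if a ∈ A then {g a} else univ) := by
    ext f
    simp only [mem_filter, mem_univ, true_and, Fintype.mem_piFinset]
    constructor
    · intro h a
      by_cases ha : a ∈ A <;> simp [ha, h]
    · intro h a ha
      have := h a
      simpa [ha] using this
  rw [h1, Fintype.card_piFinset]
  have h2 : ∀ a : α, ((if a ∈ A then ({g a} : Finset G) else univ).card)
      = if a ∈ A then 1 else Fintype.card G := by
    intro a; split <;> simp
  rw [Finset.prod_congr rfl (fun a _ => h2 a), Finset.prod_ite, Finset.prod_const,
    Finset.prod_const, one_pow, one_mul]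
  congr 1
  have : (univ.filter (fun a => ¬ a ∈ A)) = Aᶜ := by
    ext a; simp
  rw [this, Finset.card_compl]

lemma crux {s r : ℕ} (π : Fin s ↪ Fin r) (T : Finset (Fin s)) (hT : T.Nonempty)
    (Z : Fin s → G) :
    ((univ : Finset (Fin r → G)).filter
        (fun X' => (fun j => plant X' (T.map π) (π j)) = Z)).card
      = if ∑ j ∈ T, Z j = 0 then Fintype.card G ^ (r - s + 1) else 0 := by
  have hsr : s ≤ r := by simpa using Fintype.card_le_of_embedding π
  set S := T.map π with hSdef
  have hS : S.Nonempty := hT.map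
  set i := S.min' hS with hidef
  obtain ⟨j₀, hj₀T, hj₀⟩ := Finset.mem_map.mp (S.min'_mem hS)
  rw [← hidef] at hj₀
  have hs1 : 1 ≤ s := j₀.pos
  have hplant : ∀ (X' : Fin r → G) (j : Fin s),
      plant X' S (π j) = if j = j₀ then -∑ m ∈ S.erase i, X' m else X' (π j) := by
    intro X' j
    simp only [plant, dif_pos hS, ← hidef]
    by_cases h : j = j₀
    · subst h; rw [if_pos hj₀, if_pos rfl]
    · rw [if_neg (fun he => h (π.injective (he.trans hj₀.symm))), if_neg h]
  have hsum : ∀ X' : Fin r → G, (∀ j : Fin s, j ≠ j₀ → X' (π j) = Z j) →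
      ∑ m ∈ S.erase i, X' m = ∑ j ∈ T.erase j₀, Z j := by
    intro X' hne
    rw [← hj₀, hSdef, ← Finset.map_erase, Finset.sum_map]
    exact Finset.sum_congr rfl fun j hj => hne j (Finset.ne_of_mem_erase hj)
  have hcond : ∀ X' : Fin r → G,
      ((fun j => plant X' S (π j)) = Z)
        ↔ ((∀ j : Fin s, j ≠ j₀ → X' (π j) = Z j) ∧ ∑ j ∈ T, Z j = 0) := by
    intro X'
    constructor
    · intro h
      have hj' : ∀ j, plant X' S (π j) = Z j := fun j => congrFun h j
      have hne : ∀ j, j ≠ j₀ → X' (π j) = Z j := by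
        intro j hj
        have := hj' j; rwa [hplant, if_neg hj] at this
      refine ⟨hne, ?_⟩
      have h0 := hj' j₀
      rw [hplant, if_pos rfl, hsum X' hne] at h0
      rw [← Finset.add_sum_erase T Z hj₀T, ← h0]
      exact neg_add_cancel _
    · rintro ⟨hne, hzero⟩
      funext j
      show plant X' S (π j) = Z j
      rw [hplant]
      by_cases h : j = j₀
      · subst h; rw [if_pos rfl, hsum X' hne]
        have h2 := Finset.add_sum_erase T Z hj₀T
        rw [hzero] at h2
        exact neg_eq_of_add_eq_zero_left h2
      · rw [if_neg h]; exact hne j h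
  by_cases hzero : ∑ j ∈ T, Z j = 0
  · rw [if_pos hzero]
    have heq : (univ : Finset (Fin r → G)).filter
          (fun X' => (fun j => plant X' S (π j)) = Z)
        = (univ : Finset (Fin r → G)).filter
            (fun X' => ∀ a ∈ ((univ : Finset (Fin s)).erase j₀).map π,
              X' a = Function.extend π Z 0 a) := by
      ext X'
      simp only [mem_filter, mem_univ, true_and]
      rw [hcond]
      constructor
      · rintro ⟨hne, -⟩ a ha
        obtain ⟨j, hj, rfl⟩ := Finset.mem_map.mp ha
        rw [π.injective.extend_apply]
        exact hne j (Finset.ne_of_mem_erase hj)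
      · intro h
        refine ⟨fun j hj => ?_, hzero⟩
        have := h (π j)
          (Finset.mem_map_of_mem π (Finset.mem_erase.mpr ⟨hj, Finset.mem_univ j⟩))
        rwa [π.injective.extend_apply] at this
    rw [heq]
    convert count_agree (α := Fin r) (G := G)
      (((univ : Finset (Fin s)).erase j₀).map π) (Function.extend π Z 0) using 2
    · exact @Finset.filter_congr_decidable _ _ _ _ (fun _ => Fintype.decidableForallFintype)
    · rw [Finset.card_map, Finset.card_erase_of_mem (Finset.mem_univ _), Finset.card_univ,
        Fintype.card_fin, Fintype.card_fin]
      omega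
  · rw [if_neg hzero, Finset.card_eq_zero, Finset.filter_eq_empty_iff]
    intro X' _
    exact fun h => hzero ((hcond X').mp h).2

end Aux

section Counts

variable {G : Type} [AddCommGroup G] [Fintype G] [DecidableEq G]

lemma filter_card_subset_eq {s r : ℕ} (k : ℕ) (π : Fin s ↪ Fin r) :
    ((univ : Finset (Finset (Fin r))).filter
        (fun S => S.card = k ∧ S ⊆ (univ : Finset (Fin s)).map π))
      = ((univ : Finset (Fin s)).map π).powersetCard k := by
  ext S
  simp [Finset.mem_powersetCard, and_comm]

lemma Na_eq (k s r : ℕ) :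
    ((univ : Finset (Finset (Fin r) × (Fin s ↪ Fin r))).filter
        (fun p => p.1.card = k ∧ p.1 ⊆ (univ : Finset (Fin s)).map p.2)).card
      = s.choose k * Fintype.card (Fin s ↪ Fin r) := by
  refine (card_filter_prod_right (fun (S : Finset (Fin r)) (π : Fin s ↪ Fin r) =>
      S.card = k ∧ S ⊆ (univ : Finset (Fin s)).map π)).trans ?_
  have h1 : ∀ π : Fin s ↪ Fin r,
      ((univ : Finset (Finset (Fin r))).filter
          (fun S => S.card = k ∧ S ⊆ (univ : Finset (Fin s)).map π)).card = s.choose k := by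
    intro π
    rw [filter_card_subset_eq k π, Finset.card_powersetCard, Finset.card_map, Finset.card_univ,
      Fintype.card_fin]
  rw [Finset.sum_congr rfl (fun π _ => h1 π), Finset.sum_const, Finset.card_univ, smul_eq_mul,
    mul_comm]

lemma Da_eq (k s r : ℕ) :
    ((univ : Finset (Finset (Fin r) × (Fin s ↪ Fin r))).filter
        (fun p => p.1.card = k)).card
      = r.choose k * Fintype.card (Fin s ↪ Fin r) := by
  refine (card_filter_prod_right (fun (S : Finset (Fin r)) (_ : Fin s ↪ Fin r) =>
      S.card = k)).trans ?_
  have h1 : ((univ : Finset (Finset (Fin r))).filter (fun S => S.card = k)).card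
      = r.choose k := by
    have h : ((univ : Finset (Finset (Fin r))).filter (fun S => S.card = k))
        = (univ : Finset (Fin r)).powersetCard k := by
      ext S; simp [Finset.mem_powersetCard]
    rw [h, Finset.card_powersetCard, Finset.card_univ, Fintype.card_fin]
  rw [Finset.sum_congr rfl (fun π _ => h1), Finset.sum_const, Finset.card_univ, smul_eq_mul,
    mul_comm]

lemma Dc_eq (k s r : ℕ) :
    ((univ : Finset ((Fin r → G) × Finset (Fin r) × (Fin s ↪ Fin r))).filter
        (fun q => q.2.1.card = k ∧ q.2.1 ⊆ (univ : Finset (Fin s)).map q.2.2)).card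
      = Fintype.card G ^ r * (s.choose k * Fintype.card (Fin s ↪ Fin r)) := by
  refine (card_filter_prod_left (fun (_ : Fin r → G)
      (p : Finset (Fin r) × (Fin s ↪ Fin r)) =>
        p.1.card = k ∧ p.1 ⊆ (univ : Finset (Fin s)).map p.2)).trans ?_
  rw [Finset.sum_congr rfl (fun X' _ => Na_eq k s r), Finset.sum_const, Finset.card_univ,
    smul_eq_mul, Fintype.card_fun, Fintype.card_fin]

lemma Nd_eq (k s : ℕ) (hk : 1 ≤ k) (Z : Fin s → G) :
    ((univ : Finset ((Fin s → G) × Finset (Fin s))).filter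
        (fun p => p.2.card = k ∧ plant p.1 p.2 = Z)).card
      = Fintype.card G * numSol k Z := by
  refine (card_filter_prod_right (fun (Y : Fin s → G) (T : Finset (Fin s)) =>
      T.card = k ∧ plant Y T = Z)).trans ?_
  have h1 : ∀ T : Finset (Fin s),
      ((univ : Finset (Fin s → G)).filter (fun Y => T.card = k ∧ plant Y T = Z)).card
        = if T.card = k then (if ∑ j ∈ T, Z j = 0 then Fintype.card G else 0) else 0 := by
    intro T
    by_cases hTk : T.card = k
    · have hT : T.Nonempty := Finset.card_pos.mp (by omega)
      rw [if_pos hTk]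
      have hcx := crux (G := G) (Function.Embedding.refl (Fin s)) T hT Z
      simp only [Finset.map_refl, Function.Embedding.refl_apply, Nat.sub_self, zero_add,
        pow_one] at hcx
      rw [← hcx]
      apply congrArg Finset.card
      ext Y
      simp [hTk]
    · rw [if_neg hTk, Finset.card_eq_zero, Finset.filter_eq_empty_iff]
      exact fun Y _ h => hTk h.1
  refine Eq.trans (Finset.sum_congr rfl (fun T _ => h1 T)) ?_
  rw [← Finset.sum_filter]
  have h2 : (univ : Finset (Finset (Fin s))).filter (fun T => T.card = k)
      = (univ : Finset (Fin s)).powersetCard k := by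
    ext T; simp [Finset.mem_powersetCard]
  rw [h2, Finset.sum_ite, Finset.sum_const, Finset.sum_const, smul_eq_mul, smul_eq_mul,
    mul_zero, add_zero]
  simp only [numSol]
  ring

lemma Nc_eq (k s r : ℕ) (hk : 1 ≤ k) (Z : Fin s → G) :
    ((univ : Finset ((Fin r → G) × Finset (Fin r) × (Fin s ↪ Fin r))).filter
        (fun q => q.2.1.card = k ∧ q.2.1 ⊆ (univ : Finset (Fin s)).map q.2.2
          ∧ (fun j => plant q.1 q.2.1 (q.2.2 j)) = Z)).card
      = Fintype.card (Fin s ↪ Fin r) * (Fintype.card G ^ (r - s + 1) * numSol k Z) := by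
  refine (card_filter_prod_right (fun (X' : Fin r → G)
      (p : Finset (Fin r) × (Fin s ↪ Fin r)) => p.1.card = k ∧
        p.1 ⊆ (univ : Finset (Fin s)).map p.2 ∧ (fun j => plant X' p.1 (p.2 j)) = Z)).trans ?_
  have h1 : ∀ p : Finset (Fin r) × (Fin s ↪ Fin r),
      ((univ : Finset (Fin r → G)).filter (fun X' => p.1.card = k ∧
          p.1 ⊆ (univ : Finset (Fin s)).map p.2 ∧ (fun j => plant X' p.1 (p.2 j)) = Z)).card
        = if p.1.card = k ∧ p.1 ⊆ (univ : Finset (Fin s)).map p.2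
            then ((univ : Finset (Fin r → G)).filter
              (fun X' => (fun j => plant X' p.1 (p.2 j)) = Z)).card else 0 := by
    intro p
    by_cases hp : p.1.card = k ∧ p.1 ⊆ (univ : Finset (Fin s)).map p.2
    · rw [if_pos hp]
      apply congrArg Finset.card
      ext X'
      simp only [mem_filter, mem_univ, true_and, hp.1, hp.2, true_and]
    · rw [if_neg hp, Finset.card_eq_zero, Finset.filter_eq_empty_iff]
      exact fun X' _ h => hp ⟨h.1, h.2.1⟩
  refine Eq.trans (Finset.sum_congr rfl (fun p _ => h1 p)) ?_
  rw [Fintype.sum_prod_type_right]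
  have h2 : ∀ π : Fin s ↪ Fin r,
      (∑ S : Finset (Fin r), if S.card = k ∧ S ⊆ (univ : Finset (Fin s)).map π
          then ((univ : Finset (Fin r → G)).filter
            (fun X' => (fun j => plant X' S (π j)) = Z)).card else 0)
        = Fintype.card G ^ (r - s + 1) * numSol k Z := by
    intro π
    rw [← Finset.sum_filter, filter_card_subset_eq k π, Finset.powersetCard_map,
      Finset.sum_map]
    have h3 : ∀ T ∈ (univ : Finset (Fin s)).powersetCard k,
        ((univ : Finset (Fin r → G)).filter
            (fun X' => (fun j => plant X' ((Finset.mapEmbedding π).toEmbedding T) (π j)) = Z)).card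
          = if ∑ j ∈ T, Z j = 0 then Fintype.card G ^ (r - s + 1) else 0 := by
      intro T hTmem
      have hTk : T.card = k := (Finset.mem_powersetCard.mp hTmem).2
      have hT : T.Nonempty := Finset.card_pos.mp (by omega)
      have hcx := crux (G := G) π T hT Z
      convert hcx
      simp [Finset.mapEmbedding_apply]
    refine Eq.trans (Finset.sum_congr rfl h3) ?_
    rw [Finset.sum_ite, Finset.sum_const, Finset.sum_const, smul_eq_mul, smul_eq_mul,
      mul_zero, add_zero]
    simp only [numSol]
    ring
  refine Eq.trans (Finset.sum_congr rfl (fun π _ => h2 π)) ?_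
  rw [Finset.sum_const, Finset.card_univ, smul_eq_mul]

end Counts

/-- **Subsampling a planted instance.**
(a) `Pr[S ⊆ range(π)] = Π_{i=0}^{k−1} (s−i)/(r−i)`; and
(b) conditioned on `S ⊆ range(π)`, the array `(X_{π(1)}, …, X_{π(s)}) ∈ G^s` is
distributed according to the planted distribution `D1` on `G^s` (with the same `k`). -/
theorem planted_subsampling
    (G : Type) [AddCommGroup G] [Fintype G] [DecidableEq G]
    (k s r : ℕ) (hk : 1 ≤ k) (hks : k ≤ s) (hsr : s ≤ r) :
    (coverProb k s r = ∏ i ∈ Finset.range k, ((s : ℝ) - (i : ℝ)) / ((r : ℝ) - (i : ℝ)))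
    ∧ (∀ Z : Fin s → G, condPulledPmf G k s r Z = D1pmf k Z) := by
  have hcG : (0:ℝ) < (Fintype.card G : ℝ) := by exact_mod_cast Fintype.card_pos
  have hIpos : 0 < Fintype.card (Fin s ↪ Fin r) := by
    rw [Fintype.card_embedding_eq, Fintype.card_fin, Fintype.card_fin]
    exact Nat.pos_of_ne_zero fun h => by
      rw [Nat.descFactorial_eq_zero_iff_lt] at h; omega
  have hI : (0:ℝ) < (Fintype.card (Fin s ↪ Fin r) : ℝ) := by exact_mod_cast hIpos
  have hCrk : (0:ℝ) < (r.choose k : ℝ) := by exact_mod_cast Nat.choose_pos (hks.trans hsr)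
  have hCsk : (0:ℝ) < (s.choose k : ℝ) := by exact_mod_cast Nat.choose_pos hks
  constructor
  · have h1 : ∀ n : ℕ, k ≤ n →
        ∏ i ∈ Finset.range k, ((n:ℝ) - (i:ℝ)) = (n.descFactorial k : ℝ) := by
      intro n hn
      rw [Nat.descFactorial_eq_prod_range, Nat.cast_prod]
      exact Finset.prod_congr rfl fun i hi =>
        (Nat.cast_sub (le_of_lt (lt_of_lt_of_le (Finset.mem_range.mp hi) hn))).symm
    have hprod : ∏ i ∈ Finset.range k, ((s:ℝ) - (i:ℝ)) / ((r:ℝ) - (i:ℝ))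
        = (s.choose k : ℝ) / (r.choose k : ℝ) := by
      rw [Finset.prod_div_distrib, h1 s hks, h1 r (hks.trans hsr),
        Nat.descFactorial_eq_factorial_mul_choose, Nat.descFactorial_eq_factorial_mul_choose]
      push_cast
      rw [mul_div_mul_left _ _ (show ((Nat.factorial k : ℕ) : ℝ) ≠ 0 by
        exact_mod_cast Nat.factorial_ne_zero k)]
    rw [coverProb, Na_eq, Da_eq, hprod]
    push_cast
    rw [mul_comm ((s.choose k : ℝ)) _, mul_comm ((r.choose k : ℝ)) _,
      mul_div_mul_left _ _ hI.ne']
  · intro Z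
    rw [condPulledPmf, D1pmf, Nc_eq k s r hk Z, Dc_eq k s r, Nd_eq k s hk Z]
    have hpow : (Fintype.card G : ℝ) ^ (r - s + 1) * (Fintype.card G : ℝ) ^ s
        = (Fintype.card G : ℝ) * (Fintype.card G : ℝ) ^ r := by
      rw [← pow_add, ← pow_succ']
      congr 1
      omega
    push_cast
    rw [div_eq_div_iff
      (ne_of_gt (by positivity))
      (ne_of_gt (mul_pos (pow_pos hcG s) hCsk))]
    linear_combination ((numSol k Z : ℝ) * (s.choose k : ℝ)
      * (Fintype.card (Fin s ↪ Fin r) : ℝ)) * hpow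
end
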